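/- arXiv:2003.02753 — 4 statements merged into one kernel-verified Lean document; each statement's English description precedes it below -/
import Mathlib

section
/- Let S = {s_1,…,s_n} be a totally ordered alphabet, let 1 ≤ i < j ≤ n, let u, v be words over S, and let b_{i,j} = s_i s_j s_i ⋯ be the alternating word of odd length m starting with s_i. Let κ be the number of occurrences in u of letters s_k with i < k ≤ j, and μ the number of occurrences in v of letters s_k with i ≤ k < j. Then σ(u b_{i,j} v) = (−1)^{κ+μ} σ(u b_{j,i} v). -/
/-- The number of inversions of a word `w`: pairs of positions `(p,q)` with `p < q` such that
the letter at position `q` is strictly smaller than the letter at position `p`. -/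
def invCount {S : Type*} [LinearOrder S] (w : List S) : ℕ :=
  (Finset.univ.filter
    (fun p : Fin w.length × Fin w.length => p.1 < p.2 ∧ w.get p.2 < w.get p.1)).card

/-- The `S`-sign of a word. -/
def ssign {S : Type*} [LinearOrder S] (w : List S) : ℤ := (-1) ^ invCount w

/-- The alternating word of length `m` starting with `a` (then `b`, `a`, `b`, …). -/
def altWord {S : Type*} (a b : S) : ℕ → List S
  | 0 => []
  | m + 1 => a :: altWord b a m

section Aux

variable {S : Type*} [LinearOrder S]

lemma countP_eq_sum_aux (w : List S) (p : S → Bool) :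
    w.countP p = ∑ i : Fin w.length, if p (w.get i) then 1 else 0 := by
  induction w with
  | nil => simp
  | cons c w ih =>
    simp only [List.countP_cons, List.length_cons, Fin.sum_univ_succ,
      List.get_cons_succ', List.get_cons_zero, ih]
    by_cases h : p c <;> simp [h] <;> omega

lemma invCount_cons (c : S) (w : List S) :
    invCount (c :: w) = w.countP (fun d => decide (d < c)) + invCount w := by
  rw [invCount, Finset.card_filter, Fintype.sum_prod_type]
  simp only [List.length_cons]
  rw [Fin.sum_univ_succ]
  simp only [Fin.sum_univ_succ, List.get_cons_succ', List.get_cons_zero]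
  rw [invCount, Finset.card_filter, Fintype.sum_prod_type, countP_eq_sum_aux]
  simp [Fin.succ_lt_succ_iff, List.get_cons_succ']

/-- Cross inversions between two consecutive blocks. -/
def crossInv (x y : List S) : ℕ :=
  (x.map (fun c => y.countP (fun d => decide (d < c)))).sum

lemma invCount_append (x y : List S) :
    invCount (x ++ y) = invCount x + invCount y + crossInv x y := by
  induction x with
  | nil => simp [invCount, crossInv]
  | cons c x ih =>
    simp only [List.cons_append, invCount_cons, ih, List.countP_append, crossInv,
      List.map_cons, List.sum_cons]
    omega

lemma crossInv_cons (c : S) (x y : List S) :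
    crossInv (c :: x) y = y.countP (fun d => decide (d < c)) + crossInv x y := by
  simp [crossInv]

lemma altWord_countP (p : S → Bool) : ∀ (m : ℕ) (a b : S),
    (altWord a b m).countP p =
      (m + 1) / 2 * (if p a then 1 else 0) + m / 2 * (if p b then 1 else 0) := by
  intro m
  induction m with
  | zero => intro a b; simp [altWord]
  | succ m ih =>
    intro a b
    rw [altWord, List.countP_cons, ih b a]
    by_cases h1 : p a <;> by_cases h2 : p b <;> simp [h1, h2] <;> omega

lemma crossInv_altWord_right (u : List S) : ∀ (m : ℕ) (a b : S),
    crossInv u (altWord a b m) =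
      (m + 1) / 2 * u.countP (fun c => decide (a < c)) +
      m / 2 * u.countP (fun c => decide (b < c)) := by
  intro m a b
  induction u with
  | nil => simp [crossInv]
  | cons c u ih =>
    rw [crossInv_cons, ih, altWord_countP, List.countP_cons, List.countP_cons]
    by_cases h1 : a < c <;> by_cases h2 : b < c <;> simp [h1, h2] <;> ring

lemma crossInv_altWord_left (v : List S) : ∀ (m : ℕ) (a b : S),
    crossInv (altWord a b m) v =
      (m + 1) / 2 * v.countP (fun d => decide (d < a)) +
      m / 2 * v.countP (fun d => decide (d < b)) := by
  intro m
  induction m with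
  | zero => intro a b; simp [altWord, crossInv]
  | succ m ih =>
    intro a b
    rw [altWord, crossInv_cons, ih b a]
    have h : (m + 1 + 1) / 2 = m / 2 + 1 := by omega
    rw [h]; ring

lemma invCount_altWord_swap {a b : S} (hab : a < b) (k : ℕ) :
    invCount (altWord a b (2 * k + 1)) = invCount (altWord b a (2 * k + 1)) := by
  induction k with
  | zero => simp [altWord, invCount_cons]
  | succ k ih =>
    have e2 : ∀ (x y : S) (m : ℕ), altWord x y (m + 2) = x :: y :: altWord x y m := by
      intro x y m; rfl
    have e1 : 2 * (k + 1) + 1 = (2 * k + 1) + 2 := by ring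
    rw [e1, e2, e2, invCount_cons, invCount_cons, invCount_cons, invCount_cons, ih,
      List.countP_cons, List.countP_cons, altWord_countP, altWord_countP,
      altWord_countP, altWord_countP]
    have h1 : ¬ (b < a) := not_lt.mpr hab.le
    simp [hab, h1, lt_irrefl]
    omega

lemma crossInv_append_right (x y z : List S) :
    crossInv x (y ++ z) = crossInv x y + crossInv x z := by
  induction x with
  | nil => simp [crossInv]
  | cons c x ih => simp only [crossInv_cons, ih, List.countP_append]; ring

lemma crossInv_append_left (x y z : List S) :
    crossInv (x ++ y) z = crossInv x z + crossInv y z := by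
  simp [crossInv, List.map_append]

lemma invCount_append3 (x y z : List S) :
    invCount (x ++ y ++ z) = invCount x + invCount y + invCount z
      + crossInv x y + crossInv x z + crossInv y z := by
  rw [invCount_append, invCount_append, crossInv_append_left]; ring

lemma countP_split_u {a b : S} (hab : a < b) (u : List S) :
    u.countP (fun c => decide (a < c)) =
      u.countP (fun c => decide (a < c ∧ c ≤ b)) + u.countP (fun c => decide (b < c)) := by
  induction u with
  | nil => simp
  | cons c u ih =>
    simp only [List.countP_cons, ih]
    by_cases h1 : a < c
    · by_cases h2 : c ≤ b
      · simp [h1, h2, not_lt.mpr h2]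
        omega
      · simp [h1, h2, not_le.mp h2]
        omega
    · have h3 : ¬ b < c := fun h => h1 (hab.trans h)
      simp [h1, h3]

lemma countP_split_v {a b : S} (hab : a < b) (v : List S) :
    v.countP (fun c => decide (c < b)) =
      v.countP (fun c => decide (a ≤ c ∧ c < b)) + v.countP (fun c => decide (c < a)) := by
  induction v with
  | nil => simp
  | cons c v ih =>
    simp only [List.countP_cons, ih]
    by_cases h1 : c < b
    · by_cases h2 : a ≤ c
      · simp [h1, h2, not_lt.mpr h2]
        omega
      · simp [h1, h2, not_le.mp h2]
        omega
    · have h3 : ¬ c < a := not_lt.mpr (hab.le.trans (not_lt.mp h1))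
      simp [h1, h3]

end Aux

/-- Odd braid moves: `σ(u b_{i,j} v) = (-1)^{κ+μ} σ(u b_{j,i} v)` when `m` is odd, where `κ` is
the number of letters `c` of `u` with `a < c ≤ b` and `μ` is the number of letters `c` of `v`
with `a ≤ c < b`. -/
theorem ssign_braid_move_odd {S : Type*} [LinearOrder S] {a b : S} (hab : a < b)
    (m : ℕ) (hm : Odd m) (u v : List S) :
    ssign (u ++ altWord a b m ++ v) =
      (-1) ^ (u.countP (fun c => decide (a < c ∧ c ≤ b)) +
              v.countP (fun c => decide (a ≤ c ∧ c < b))) *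
        ssign (u ++ altWord b a m ++ v) := by
  obtain ⟨k, hk⟩ := hm
  subst hk
  rw [ssign, ssign]
  set κ := u.countP (fun c => decide (a < c ∧ c ≤ b)) with hκ
  set μ := v.countP (fun c => decide (a ≤ c ∧ c < b)) with hμ
  set N1 := invCount (u ++ altWord a b (2 * k + 1) ++ v) with hN1
  set N2 := invCount (u ++ altWord b a (2 * k + 1) ++ v) with hN2
  have key : N1 + μ = N2 + κ := by
    rw [hN1, hN2, invCount_append3, invCount_append3, crossInv_altWord_right,
      crossInv_altWord_right, crossInv_altWord_left, crossInv_altWord_left,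
      invCount_altWord_swap hab k]
    have e1 : (2 * k + 1 + 1) / 2 = k + 1 := by omega
    have e2 : (2 * k + 1) / 2 = k := by omega
    rw [e1, e2, countP_split_u hab u, countP_split_v hab v, ← hκ, ← hμ]
    ring
  have h2 : ((-1 : ℤ) ^ μ) * ((-1 : ℤ) ^ μ) = 1 := by
    rw [← pow_add]
    exact Even.neg_one_pow ⟨μ, rfl⟩
  calc ((-1 : ℤ)) ^ N1 = (-1) ^ N1 * ((-1 : ℤ) ^ μ * (-1 : ℤ) ^ μ) := by rw [h2, mul_one]
    _ = (-1) ^ (N1 + μ + μ) := by rw [pow_add, pow_add]; ring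
    _ = (-1) ^ (N2 + κ + μ) := by rw [show N1 + μ + μ = N2 + κ + μ from by omega]
    _ = (-1) ^ (κ + μ) * (-1) ^ N2 := by rw [pow_add, pow_add]; ring
end

section
/- For a partition λ = (λ_1 ≥ ⋯ ≥ λ_d ≥ 0), the determinant of the d×d matrix with (i,j)-entry x_j^{i−1+λ_{d−i+1}} is divisible, in ℤ[x_1,…,x_d], by the Vandermonde determinant ∏_{1≤i<j≤d}(x_j − x_i), and the quotient (the Schur polynomial s_λ) is a symmetric polynomial in x_1,…,x_d. -/
open Finset MvPolynomial

private theorem prod_primes_dvd' {α : Type*} [CommMonoidWithZero α] [IsCancelMulZero α] {ι : Type*}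
    (s : Finset ι) (f : ι → α) (n : α) (hp : ∀ a ∈ s, Prime (f a))
    (hnd : ∀ a ∈ s, ∀ b ∈ s, a ≠ b → ¬ f a ∣ f b)
    (hd : ∀ a ∈ s, f a ∣ n) : (∏ a ∈ s, f a) ∣ n := by
  induction s using Finset.cons_induction generalizing n with
  | empty => simp
  | cons a s ha ih =>
    obtain ⟨m, rfl⟩ := hd a (Finset.mem_cons_self a s)
    rw [Finset.prod_cons]
    refine mul_dvd_mul_left _ (ih m (fun b hb => hp b (Finset.mem_cons_of_mem hb))
      (fun b hb c hc hbc => hnd b (Finset.mem_cons_of_mem hb) c (Finset.mem_cons_of_mem hc) hbc)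
      (fun b hb => ?_))
    have hbn := hd b (Finset.mem_cons_of_mem hb)
    refine ((hp b (Finset.mem_cons_of_mem hb)).dvd_or_dvd hbn).resolve_left ?_
    exact hnd b (Finset.mem_cons_of_mem hb) a (Finset.mem_cons_self a s)
      (fun h => ha (h ▸ hb))

private noncomputable def subEquiv {d : ℕ} (i : Fin d) :
    MvPolynomial (Fin d) ℤ ≃ₐ[ℤ] Polynomial (MvPolynomial {k : Fin d // k ≠ i} ℤ) :=
  (renameEquiv ℤ (Equiv.optionSubtypeNe i).symm).trans (optionEquivLeft ℤ _)

private theorem subEquiv_X_self {d : ℕ} (i : Fin d) :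
    subEquiv i (X i) = Polynomial.X := by
  simp [subEquiv, Equiv.optionSubtypeNe_symm_self, optionEquivLeft_X_none]

private theorem subEquiv_X_ne {d : ℕ} {i k : Fin d} (h : k ≠ i) :
    subEquiv i (X k) = Polynomial.C (X ⟨k, h⟩) := by
  simp [subEquiv, Equiv.optionSubtypeNe_symm_of_ne h, optionEquivLeft_X_some]

private theorem prime_X_sub_X {d : ℕ} {i j : Fin d} (h : j ≠ i) :
    Prime (X j - X i : MvPolynomial (Fin d) ℤ) := by
  have heq : (subEquiv i) (X j - X i) = -(Polynomial.X - Polynomial.C (X ⟨j, h⟩)) := by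
    rw [map_sub, subEquiv_X_self, subEquiv_X_ne h]; ring
  have hp : Prime ((subEquiv i) (X j - X i)) := by
    rw [heq]; exact (Polynomial.prime_X_sub_C _).neg
  exact (MulEquiv.prime_iff (subEquiv i).toMulEquiv).mp hp

private theorem X_sub_X_dvd {d : ℕ} {i j : Fin d} (h : j ≠ i) {P : MvPolynomial (Fin d) ℤ}
    (hP : aeval (fun k => if k = i then X j else X k) P = (0 : MvPolynomial (Fin d) ℤ)) :
    (X j - X i : MvPolynomial (Fin d) ℤ) ∣ P := by
  have key : Polynomial.aeval (X ⟨j, h⟩ : MvPolynomial {k : Fin d // k ≠ i} ℤ)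
      ((subEquiv i) P) = 0 := by
    have hcomp : ((Polynomial.aeval (X ⟨j, h⟩ : MvPolynomial {k : Fin d // k ≠ i} ℤ)).restrictScalars ℤ).comp
          (subEquiv i).toAlgHom
        = (aeval (fun k : Fin d => if hk : k = i then X ⟨j, h⟩ else X ⟨k, hk⟩)).comp
            (aeval (fun k => if k = i then X j else X k)) := by
      apply MvPolynomial.algHom_ext
      intro k
      by_cases hk : k = i
      · subst hk
        simp [subEquiv_X_self, h]
      · simp [hk, subEquiv_X_ne hk]
    have h2 := DFunLike.congr_fun hcomp P
    simp only [AlgHom.coe_comp, Function.comp_apply, AlgHom.coe_restrictScalars',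
      AlgEquiv.toAlgHom_eq_coe, AlgHom.coe_coe, hP, map_zero] at h2
    exact h2
  have hroot : Polynomial.IsRoot ((subEquiv i) P) (X ⟨j, h⟩) := by
    rwa [Polynomial.IsRoot, ← Polynomial.coe_aeval_eq_eval]
  obtain ⟨q, hq⟩ := (Polynomial.dvd_iff_isRoot).2 hroot
  refine ⟨-((subEquiv i).symm q), ?_⟩
  apply (subEquiv i).injective
  rw [map_mul, map_sub, subEquiv_X_self, subEquiv_X_ne h, hq, map_neg,
    AlgEquiv.apply_symm_apply]
  ring

private theorem not_dvd_X_sub_X {d : ℕ} {i j i' j' : Fin d} (hij : i < j) (hij' : i' < j')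
    (hne : ¬ (i = i' ∧ j = j')) :
    ¬ (X j' - X i' : MvPolynomial (Fin d) ℤ) ∣ (X j - X i) := by
  classical
  intro hdvd
  obtain ⟨k, hk, hki, hkj⟩ : ∃ k, (k = i ∨ k = j) ∧ k ≠ i' ∧ k ≠ j' := by
    by_cases h1 : i ≠ i' ∧ i ≠ j'
    · exact ⟨i, Or.inl rfl, h1.1, h1.2⟩
    by_cases h2 : j ≠ i' ∧ j ≠ j'
    · exact ⟨j, Or.inr rfl, h2.1, h2.2⟩
    exfalso
    rw [not_and_or] at h1 h2
    simp only [not_ne_iff] at h1 h2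
    rcases h1 with h1 | h1 <;> rcases h2 with h2 | h2
    · subst h1; subst h2; exact lt_irrefl _ hij
    · exact hne ⟨h1, h2⟩
    · subst h1; subst h2; exact lt_irrefl _ (hij.trans hij')
    · subst h1; subst h2; exact lt_irrefl _ hij
  have h0 := map_dvd (eval (fun t : Fin d => if t = k then (1 : ℤ) else 0)) hdvd
  rcases hk with rfl | rfl
  · simp [Ne.symm hki, Ne.symm hkj, hij.ne'] at h0
  · simp [Ne.symm hki, Ne.symm hkj, hij.ne] at h0

set_option maxHeartbeats 2000000 in
/-- For a partition `λ = (λ_1 ≥ … ≥ λ_d ≥ 0)` (here `lam i.rev` is `λ_{d-i+1}` for a zero-based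
row index `i`), the bialternant determinant `det (x_j^{i-1+λ_{d-i+1}})` is divisible by the
Vandermonde determinant `∏_{i<j} (x_j - x_i)` in `ℤ[x_1,…,x_d]`, and the quotient (the Schur
polynomial) is symmetric. -/
theorem schur_bialternant (d : ℕ) (lam : Fin d → ℕ) (hlam : Antitone lam) :
    ∃ s : MvPolynomial (Fin d) ℤ,
      (Matrix.of fun i j : Fin d =>
          (X j : MvPolynomial (Fin d) ℤ) ^ ((i : ℕ) + lam i.rev)).det =
        (∏ i : Fin d, ∏ j ∈ Ioi i, (X j - X i : MvPolynomial (Fin d) ℤ)) * s ∧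
      ∀ σ : Equiv.Perm (Fin d), rename σ s = s := by
  classical
  set M : Matrix (Fin d) (Fin d) (MvPolynomial (Fin d) ℤ) :=
    Matrix.of fun i j : Fin d => (X j : MvPolynomial (Fin d) ℤ) ^ ((i : ℕ) + lam i.rev) with hM
  set V : MvPolynomial (Fin d) ℤ :=
    ∏ i : Fin d, ∏ j ∈ Ioi i, (X j - X i : MvPolynomial (Fin d) ℤ) with hVdef
  have hdvd : V ∣ M.det := by
    have hVs : V = ∏ p ∈ (univ : Finset (Fin d)).sigma (fun i => Ioi i),
        (X p.2 - X p.1 : MvPolynomial (Fin d) ℤ) := by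
      rw [Finset.prod_sigma]
    rw [hVs]
    refine prod_primes_dvd' _ _ _ ?_ ?_ ?_
    · rintro ⟨a, b⟩ hab
      have hab' : a < b := by simpa using hab
      exact prime_X_sub_X hab'.ne'
    · rintro ⟨a, b⟩ hab ⟨a', b'⟩ hab' hne
      have h1 : a < b := by simpa using hab
      have h2 : a' < b' := by simpa using hab'
      refine not_dvd_X_sub_X h2 h1 ?_
      rintro ⟨rfl, rfl⟩
      exact hne rfl
    · rintro ⟨a, b⟩ hab
      have hab' : a < b := by simpa using hab
      apply X_sub_X_dvd hab'.ne'
      rw [AlgHom.map_det]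
      apply Matrix.det_zero_of_column_eq hab'.ne
      intro r
      simp [hM, hab'.ne']
  obtain ⟨s, hs⟩ := hdvd
  refine ⟨s, hs, ?_⟩
  intro σ
  have hV0 : V ≠ 0 := by
    rw [hVdef]
    refine Finset.prod_ne_zero_iff.mpr fun a _ => Finset.prod_ne_zero_iff.mpr fun b hb => ?_
    have hab : a < b := by simpa using hb
    exact (prime_X_sub_X hab.ne').ne_zero
  set ε : MvPolynomial (Fin d) ℤ := ((Equiv.Perm.sign σ : ℤ) : MvPolynomial (Fin d) ℤ) with hε
  have hεε : ε * ε = 1 := by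
    rw [hε, ← Int.cast_mul, ← Units.val_mul, Int.units_mul_self, Units.val_one, Int.cast_one]
  have hrD : rename σ M.det = ε * M.det := by
    have h1 : rename σ M.det = ((rename σ).mapMatrix M).det := AlgHom.map_det _ M
    have h2 : (rename σ).mapMatrix M = M.submatrix id σ := by
      ext r c
      simp [hM]
    rw [h1, h2, Matrix.det_permute']
  have hrV : rename σ V = ε * V := by
    have hvd : V = (Matrix.vandermonde fun k : Fin d => (X k : MvPolynomial (Fin d) ℤ)).det := by
      rw [Matrix.det_vandermonde]
    have h1 : rename σ V
        = ((rename σ).mapMatrix (Matrix.vandermonde fun k : Fin d => (X k : MvPolynomial (Fin d) ℤ))).det := by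
      rw [hvd]; exact AlgHom.map_det _ _
    have h2 : (rename σ).mapMatrix (Matrix.vandermonde fun k : Fin d => (X k : MvPolynomial (Fin d) ℤ))
        = (Matrix.vandermonde fun k : Fin d => (X k : MvPolynomial (Fin d) ℤ)).submatrix σ id := by
      ext r c
      simp [Matrix.vandermonde]
    rw [h1, h2, Matrix.det_permute, ← hvd]
  have hmain : M.det = V * rename σ s := by
    have := congrArg (rename σ) hs
    rw [map_mul, hrD, hrV, hs] at this
    have h3 : ε * (ε * (V * s)) = ε * (ε * V * rename σ s) := by rw [this]
    rwa [← mul_assoc, ← mul_assoc, hεε, one_mul, ← mul_assoc, ← mul_assoc, hεε, one_mul,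
      ← hs] at h3
  exact mul_left_cancel₀ hV0 (hmain.symm.trans hs)
end

section
/- Dual Cauchy identity: for positive integers a and b and variables x_1,…,x_a, y_1,…,y_b, ∏_{i=1}^{a} ∏_{j=1}^{b} (1 + x_i y_j) = Σ_λ s_λ(x_1,…,x_a) · s_{λ'}(y_1,…,y_b), where the sum is over all partitions λ with at most a parts, each of size at most b, and λ' denotes the conjugate partition. -/
open Finset MvPolynomial

/-- The Vandermonde product `∏_{i<j} (z_j - z_i)`. -/
def vandProd {R : Type*} [CommRing R] {d : ℕ} (z : Fin d → R) : R :=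
  ∏ i : Fin d, ∏ j ∈ Ioi i, (z j - z i)

/-- The bialternant numerator `det (z_j^{i-1+λ_{d-i+1}})` of the Schur polynomial `s_λ`,
so that `s_λ(z) = altDet lam z / vandProd z`. -/
def altDet {R : Type*} [CommRing R] {d : ℕ} (lam : Fin d → ℕ) (z : Fin d → R) : R :=
  (Matrix.of fun i j : Fin d => z j ^ ((i : ℕ) + lam i.rev)).det

/-- The conjugate partition: `λ'_j` (zero-based `j`) is the number of parts of `λ` exceeding
`j`. -/
def conjPart {a : ℕ} (b : ℕ) (lam : Fin a → ℕ) : Fin b → ℕ :=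
  fun j => (Finset.univ.filter (fun i : Fin a => (j : ℕ) < lam i)).card

namespace DC

variable {a b : ℕ}

abbrev LamT (a b : ℕ) :=
  {lam : Fin a → Fin (b + 1) // ∀ i j : Fin a, i ≤ j → (lam j : ℕ) ≤ (lam i : ℕ)}

def L (lam : LamT a b) : Fin a → ℕ := fun i => lam.1 i

lemma L_le (lam : LamT a b) (i : Fin a) : L lam i ≤ b := Nat.lt_succ_iff.mp (lam.1 i).2

lemma L_anti (lam : LamT a b) {i j : Fin a} (h : i ≤ j) : L lam j ≤ L lam i := lam.2 i j h

/-- Key: `j < λ_i ↔ i < λ'_j`. -/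
lemma lt_L_iff (lam : LamT a b) (i : Fin a) (j : Fin b) :
    (j : ℕ) < L lam i ↔ (i : ℕ) < conjPart b (L lam) j := by
  constructor
  · intro h
    have hsub : Finset.Iic i ⊆ Finset.univ.filter (fun i' : Fin a => (j : ℕ) < L lam i') := by
      intro i' hi'
      simp only [Finset.mem_Iic] at hi'
      simp only [Finset.mem_filter, Finset.mem_univ, true_and]
      exact lt_of_lt_of_le h (L_anti lam hi')
    have := Finset.card_le_card hsub
    rw [Fin.card_Iic] at this
    exact lt_of_lt_of_le (Nat.lt_succ_self _) this
  · intro h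
    by_contra hc
    push_neg at hc
    have hsub : Finset.univ.filter (fun i' : Fin a => (j : ℕ) < L lam i') ⊆ Finset.Iio i := by
      intro i' hi'
      simp only [Finset.mem_filter, Finset.mem_univ, true_and] at hi'
      simp only [Finset.mem_Iio]
      by_contra hii
      push_neg at hii
      exact absurd (lt_of_lt_of_le hi' (L_anti lam hii)) (not_lt.mpr hc)
    have := Finset.card_le_card hsub
    rw [Fin.card_Iio] at this
    exact absurd (lt_of_lt_of_le h this) (lt_irrefl _)

lemma conj_le (lam : LamT a b) (j : Fin b) : conjPart b (L lam) j ≤ a := by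
  simpa [conjPart] using Finset.card_le_card (Finset.filter_subset _ (univ : Finset (Fin a)))

lemma conj_anti (lam : LamT a b) {j j' : Fin b} (h : j ≤ j') :
    conjPart b (L lam) j' ≤ conjPart b (L lam) j := by
  apply Finset.card_le_card
  intro i hi
  simp only [Finset.mem_filter, Finset.mem_univ, true_and] at hi ⊢
  exact lt_of_le_of_lt h hi

def mu (lam : LamT a b) : Fin a → ℕ := fun i => i + L lam i.rev

def nu (lam : LamT a b) : Fin b → ℕ := fun j => j + conjPart b (L lam) j.rev

lemma mu_strictMono (lam : LamT a b) : StrictMono (mu lam) := by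
  intro i i' h
  have h1 : (i : ℕ) + 1 ≤ i' := h
  have h2 : L lam i.rev ≤ L lam i'.rev := L_anti lam (by
    rw [Fin.rev_le_rev]; exact le_of_lt h)
  simp only [mu]; omega

lemma nu_strictMono (lam : LamT a b) : StrictMono (nu lam) := by
  intro j j' h
  have h1 : (j : ℕ) + 1 ≤ j' := h
  have h2 : conjPart b (L lam) j.rev ≤ conjPart b (L lam) j'.rev := conj_anti lam (by
    rw [Fin.rev_le_rev]; exact le_of_lt h)
  simp only [nu]; omega

lemma mu_lt (lam : LamT a b) (i : Fin a) : mu lam i < a + b := by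
  have := L_le lam i.rev
  have := i.2
  simp only [mu]; omega

lemma nu_lt (lam : LamT a b) (j : Fin b) : nu lam j < a + b := by
  have := conj_le lam j.rev
  have := j.2
  simp only [nu]; omega

lemma nu_le (lam : LamT a b) (j : Fin b) : nu lam j ≤ a + b - 1 := by
  have := conj_le lam j.rev
  have := j.2
  simp only [nu]; omega

/-- disjointness of exponent sets -/
lemma mu_add_nu_ne (lam : LamT a b) (i : Fin a) (j : Fin b) :
    mu lam i + nu lam j ≠ a + b - 1 := by
  have hi : (i.rev : ℕ) = a - 1 - i := Fin.val_rev i ▸ by omega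
  have hj : (j.rev : ℕ) = b - 1 - j := Fin.val_rev j ▸ by omega
  have hia := i.2
  have hjb := j.2
  rcases lt_or_ge (i.rev : ℕ) (conjPart b (L lam) j.rev) with hlt | hle
  · have := (lt_L_iff lam i.rev j.rev).mpr hlt
    -- j.rev < L i.rev : so mu i + nu j ≥ big
    simp only [mu, nu]
    omega
  · have hLle : L lam i.rev ≤ (j.rev : ℕ) := by
      by_contra hc
      push_neg at hc
      exact absurd ((lt_L_iff lam i.rev j.rev).mp hc) (not_lt.mpr hle)
    simp only [mu, nu]
    have := conj_le lam j.rev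
    omega


def muF (lam : LamT a b) : Fin a → Fin (a + b) := fun i => ⟨mu lam i, mu_lt lam i⟩

def cF (lam : LamT a b) : Fin b → Fin (a + b) := fun j =>
  ⟨a + b - 1 - nu lam j, by have := nu_lt lam j; have := j.2; omega⟩

lemma muF_injective (lam : LamT a b) : Function.Injective (muF lam) := by
  intro i i' h
  exact (mu_strictMono lam).injective (by simpa [muF, Fin.ext_iff] using h)

lemma cF_strictAnti (lam : LamT a b) {j j' : Fin b} (h : j < j') : cF lam j' < cF lam j := by
  have := nu_strictMono lam h
  have := nu_le lam j
  have := nu_le lam j'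
  simp only [cF, Fin.lt_def]
  omega

lemma cF_injective (lam : LamT a b) : Function.Injective (cF lam) := by
  intro j j' h
  rcases lt_trichotomy j j' with hlt | he | hlt
  · exact absurd h (ne_of_gt (cF_strictAnti lam hlt))
  · exact he
  · exact absurd h (ne_of_lt (cF_strictAnti lam hlt))

lemma muF_ne_cF (lam : LamT a b) (i : Fin a) (j : Fin b) : muF lam i ≠ cF lam j := by
  intro h
  have h2 := nu_le lam j
  apply mu_add_nu_ne lam i j
  have : mu lam i = a + b - 1 - nu lam j := by simpa [muF, cF, Fin.ext_iff] using h
  omega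

noncomputable def EL (lam : LamT a b) : (Fin a ⊕ Fin b) ≃ Fin (a + b) :=
  Equiv.ofBijective (Sum.elim (muF lam) (cF lam)) <| by
    rw [Fintype.bijective_iff_injective_and_card]
    refine ⟨?_, by simp⟩
    intro p q h
    rcases p with i | j <;> rcases q with i' | j' <;> simp only [Sum.elim_inl, Sum.elim_inr] at h
    · rw [muF_injective lam h]
    · exact absurd h (muF_ne_cF lam i j')
    · exact absurd h.symm (muF_ne_cF lam i' j)
    · rw [cF_injective lam h]

lemma EL_inl (lam : LamT a b) (i : Fin a) : EL lam (Sum.inl i) = muF lam i := rfl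
lemma EL_inr (lam : LamT a b) (j : Fin b) : EL lam (Sum.inr j) = cF lam j := rfl

/-- The count of `μ`-values above `c_j` is `ν_j - j`. -/
lemma count_mu_above (lam : LamT a b) (j : Fin b) :
    (Finset.univ.filter fun i => cF lam j < muF lam i).card + (j : ℕ) = nu lam j := by
  classical
  have himg : Finset.Ioi (cF lam j) =
      ((Finset.univ.filter fun i => cF lam j < muF lam i).image (muF lam)) ∪
      ((Finset.univ.filter fun j' => cF lam j < cF lam j').image (cF lam)) := by
    ext t
    simp only [Finset.mem_Ioi, Finset.mem_union, Finset.mem_image, Finset.mem_filter,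
      Finset.mem_univ, true_and]
    constructor
    · intro ht
      rcases (EL lam).surjective t with ⟨p, rfl⟩
      rcases p with i | j'
      · exact Or.inl ⟨i, ht, rfl⟩
      · exact Or.inr ⟨j', ht, rfl⟩
    · rintro (⟨i, hi, rfl⟩ | ⟨j', hj', rfl⟩) <;> assumption
  have hdisj : Disjoint
      ((Finset.univ.filter fun i => cF lam j < muF lam i).image (muF lam))
      ((Finset.univ.filter fun j' => cF lam j < cF lam j').image (cF lam)) := by
    rw [Finset.disjoint_left]
    rintro t ht ht'
    rcases Finset.mem_image.mp ht with ⟨i, _, rfl⟩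
    rcases Finset.mem_image.mp ht' with ⟨j', _, h⟩
    exact muF_ne_cF lam i j' h.symm
  have hcardIoi : (Finset.Ioi (cF lam j)).card = nu lam j := by
    rw [Fin.card_Ioi]
    have := nu_le lam j
    have hc : (cF lam j : ℕ) = a + b - 1 - nu lam j := rfl
    omega
  have hcfilter : (Finset.univ.filter fun j' => cF lam j < cF lam j') = Finset.Iio j := by
    ext j'
    simp only [Finset.mem_filter, Finset.mem_univ, true_and, Finset.mem_Iio]
    constructor
    · intro h
      by_contra hc
      push_neg at hc
      rcases eq_or_lt_of_le hc with he | hlt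
      · rw [he] at h; exact lt_irrefl _ h
      · exact absurd (cF_strictAnti lam hlt) (not_lt.mpr (le_of_lt h))
    · exact fun h => cF_strictAnti lam h
  rw [himg, Finset.card_union_of_disjoint hdisj,
    Finset.card_image_of_injective _ (muF_injective lam),
    Finset.card_image_of_injective _ (cF_injective lam), hcfilter, Fin.card_Iio] at hcardIoi
  omega


lemma prod_ite_Ioi {M : Type*} [CommMonoid M] {d : ℕ} (p : Fin d) (g : Fin d → M) :
    ∏ q ∈ Ioi p, g q = ∏ q, if p < q then g q else 1 := by
  rw [show Ioi p = univ.filter (fun q => p < q) from by ext q; simp, Finset.prod_filter]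

lemma prod_Ioi_split {M : Type*} [CommMonoid M] (f : Fin (a + b) → Fin (a + b) → M) :
    (∏ p, ∏ q ∈ Ioi p, f p q)
    = ((∏ i, ∏ i' ∈ Ioi i, f (Fin.castAdd b i) (Fin.castAdd b i')) *
       ∏ i, ∏ j, f (Fin.castAdd b i) (Fin.natAdd a j)) *
      ∏ j, ∏ j' ∈ Ioi j, f (Fin.natAdd a j) (Fin.natAdd a j') := by
  calc (∏ p, ∏ q ∈ Ioi p, f p q) = ∏ p, ∏ q, if p < q then f p q else 1 :=
        Finset.prod_congr rfl fun p _ => prod_ite_Ioi p _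
    _ = (∏ i, ∏ q, if Fin.castAdd b i < q then f (Fin.castAdd b i) q else 1) *
        (∏ j, ∏ q, if Fin.natAdd a j < q then f (Fin.natAdd a j) q else 1) :=
        Fin.prod_univ_add _
    _ = _ := by
      congr 1
      · calc (∏ i, ∏ q, if Fin.castAdd b i < q then f (Fin.castAdd b i) q else 1)
            = ∏ i, ((∏ i' ∈ Ioi i, f (Fin.castAdd b i) (Fin.castAdd b i')) *
                ∏ j, f (Fin.castAdd b i) (Fin.natAdd a j)) := by
              refine Finset.prod_congr rfl fun i _ => ?_
              rw [Fin.prod_univ_add]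
              congr 1
              · rw [prod_ite_Ioi]
                refine Finset.prod_congr rfl fun i' _ => ?_
                exact if_congr (by simp only [Fin.lt_def, Fin.coe_castAdd]) rfl rfl
              · refine Finset.prod_congr rfl fun j _ => ?_
                rw [if_pos]
                simp only [Fin.lt_def, Fin.coe_castAdd, Fin.coe_natAdd]
                have := i.2; omega
          _ = _ := Finset.prod_mul_distrib
      · refine Finset.prod_congr rfl fun j _ => ?_
        rw [Fin.prod_univ_add]
        have h0 : (∏ i' : Fin a, if Fin.natAdd a j < Fin.castAdd b i'
            then f (Fin.natAdd a j) (Fin.castAdd b i') else 1) = 1 := by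
          refine Finset.prod_eq_one fun i' _ => ?_
          rw [if_neg]
          simp only [Fin.lt_def, Fin.coe_castAdd, Fin.coe_natAdd]
          have := i'.2; omega
        rw [h0, one_mul, prod_ite_Ioi]
        refine Finset.prod_congr rfl fun j' _ => ?_
        exact if_congr (by simp only [Fin.lt_def, Fin.coe_natAdd]; omega) rfl rfl

lemma prod_Ioi_swap {M : Type*} [CommMonoid M] {d : ℕ} (f : Fin d → Fin d → M) :
    ∏ p, ∏ q ∈ Ioi p, f p q = ∏ q, ∏ p ∈ Iio q, f p q :=
  Finset.prod_comm' (by intro x y; simp [and_comm])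

lemma prod_pair_mul {M : Type*} [CommMonoid M] {d : ℕ} (u : Fin d → M) :
    ∏ p, ∏ q ∈ Ioi p, (u p * u q) = (∏ p, u p) ^ (d - 1) := by
  calc ∏ p, ∏ q ∈ Ioi p, (u p * u q)
      = ∏ p, ((u p ^ (Ioi p).card) * ∏ q ∈ Ioi p, u q) := by
        refine Finset.prod_congr rfl fun p _ => ?_
        rw [Finset.prod_mul_distrib, Finset.prod_const]
    _ = (∏ p, u p ^ (Ioi p).card) * ∏ p, ∏ q ∈ Ioi p, u q := Finset.prod_mul_distrib
    _ = (∏ p, u p ^ (Ioi p).card) * ∏ q, u q ^ (Iio q).card := by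
        rw [prod_Ioi_swap (f := fun p q => u q)]
        simp [Finset.prod_const]
    _ = ∏ p, u p ^ ((Ioi p).card + (Iio p).card) := by
        rw [← Finset.prod_mul_distrib]
        exact Finset.prod_congr rfl fun p _ => (pow_add _ _ _).symm
    _ = ∏ p, u p ^ (d - 1) := by
        refine Finset.prod_congr rfl fun p _ => ?_
        rw [Fin.card_Ioi, Fin.card_Iio]
        congr 1
        have := p.2; omega
    _ = (∏ p, u p) ^ (d - 1) := by rw [Finset.prod_pow]

/-- pairs with sign extraction -/
lemma prod_sub_perm {d : ℕ} (ρ : Equiv.Perm (Fin d)) :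
    ∏ p, ∏ q ∈ Ioi p, (((ρ q : ℕ) : ℤ) - ((ρ p : ℕ) : ℤ))
    = (∏ p, ∏ q ∈ Ioi p, (if ρ p < ρ q then (1 : ℤ) else -1)) *
      ∏ p : Fin d, ∏ q ∈ Ioi p, (((q : ℕ) : ℤ) - ((p : ℕ) : ℤ)) := by
  classical
  have prodP : ∀ (f : Fin d → Fin d → ℤ),
      ∏ z ∈ univ.filter (fun z : Fin d × Fin d => z.1 < z.2), f z.1 z.2
        = ∏ p, ∏ q ∈ Ioi p, f p q := by
    intro f
    rw [Finset.prod_filter, ← Finset.univ_product_univ, Finset.prod_product]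
    exact Finset.prod_congr rfl fun p _ => (prod_ite_Ioi p _).symm
  set P := univ.filter (fun z : Fin d × Fin d => z.1 < z.2) with hP
  rw [← prodP, ← prodP, ← prodP]
  set g : Fin d × Fin d → Fin d × Fin d := fun z =>
    if ρ z.1 < ρ z.2 then (ρ z.1, ρ z.2) else (ρ z.2, ρ z.1) with hg
  set g' : Fin d × Fin d → Fin d × Fin d := fun z =>
    if ρ.symm z.1 < ρ.symm z.2 then (ρ.symm z.1, ρ.symm z.2) else (ρ.symm z.2, ρ.symm z.1) with hg'
  have hmemP : ∀ z : Fin d × Fin d, z ∈ P ↔ z.1 < z.2 := by intro z; simp [hP]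
  have hne : ∀ z : Fin d × Fin d, z ∈ P → ρ z.1 ≠ ρ z.2 := fun z hz h =>
    absurd (ρ.injective h) (ne_of_lt ((hmemP z).mp hz))
  calc ∏ z ∈ P, (((ρ z.2 : ℕ) : ℤ) - ((ρ z.1 : ℕ) : ℤ))
      = ∏ z ∈ P, ((if ρ z.1 < ρ z.2 then (1 : ℤ) else -1) *
          ((((g z).2 : ℕ) : ℤ) - (((g z).1 : ℕ) : ℤ))) := by
        refine Finset.prod_congr rfl fun z hz => ?_
        by_cases h : ρ z.1 < ρ z.2
        · simp only [hg, if_pos h]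
          ring
        · simp only [hg, if_neg h]
          ring
    _ = (∏ z ∈ P, if ρ z.1 < ρ z.2 then (1 : ℤ) else -1) *
        ∏ z ∈ P, ((((g z).2 : ℕ) : ℤ) - (((g z).1 : ℕ) : ℤ)) := Finset.prod_mul_distrib
    _ = (∏ z ∈ P, if ρ z.1 < ρ z.2 then (1 : ℤ) else -1) *
        ∏ z ∈ P, (((z.2 : ℕ) : ℤ) - ((z.1 : ℕ) : ℤ)) := by
        congr 1
        refine Finset.prod_nbij' g g' ?_ ?_ ?_ ?_ ?_
        · intro z hz
          rw [hmemP] at hz ⊢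
          by_cases h : ρ z.1 < ρ z.2
          · simpa [hg, h] using h
          · have : ρ z.2 < ρ z.1 :=
              lt_of_le_of_ne (not_lt.mp h) (Ne.symm (hne z (by rw [hmemP]; exact hz)))
            simpa [hg, h] using this
        · intro z hz
          rw [hmemP] at hz ⊢
          by_cases h : ρ.symm z.1 < ρ.symm z.2
          · simpa [hg', h] using h
          · have hne' : ρ.symm z.1 ≠ ρ.symm z.2 := fun hh =>
              absurd (ρ.symm.injective hh) (ne_of_lt hz)
            have : ρ.symm z.2 < ρ.symm z.1 := lt_of_le_of_ne (not_lt.mp h) (Ne.symm hne')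
            simpa [hg', h] using this
        · intro z hz
          rw [hmemP] at hz
          by_cases h : ρ z.1 < ρ z.2
          · simp only [hg, hg', if_pos h, Equiv.symm_apply_apply, if_pos hz]
          · simp only [hg, hg', if_neg h, Equiv.symm_apply_apply,
              if_neg (not_lt.mpr (le_of_lt hz))]
        · intro z hz
          rw [hmemP] at hz
          by_cases h : ρ.symm z.1 < ρ.symm z.2
          · simp only [hg, hg', if_pos h, Equiv.apply_symm_apply, if_pos hz]
          · simp only [hg, hg', if_neg h, Equiv.apply_symm_apply,
              if_neg (not_lt.mpr (le_of_lt hz))]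
        · intro z hz
          by_cases h : ρ z.1 < ρ z.2
          · simp [hg, h]
          · simp [hg, h]


noncomputable def G (lam : LamT a b) : Equiv.Perm (Fin a ⊕ Fin b) :=
  (EL lam).trans finSumFinEquiv.symm

noncomputable def rho (lam : LamT a b) : Equiv.Perm (Fin (a + b)) :=
  finSumFinEquiv.permCongr (G lam)

lemma rho_apply (lam : LamT a b) (k : Fin (a + b)) :
    rho lam k = EL lam (finSumFinEquiv.symm k) := by
  simp [rho, G, Equiv.permCongr_apply]

lemma rho_castAdd (lam : LamT a b) (i : Fin a) :
    rho lam (Fin.castAdd b i) = muF lam i := by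
  rw [rho_apply, finSumFinEquiv_symm_apply_castAdd, EL_inl]

lemma rho_natAdd (lam : LamT a b) (j : Fin b) :
    rho lam (Fin.natAdd a j) = cF lam j := by
  rw [rho_apply, finSumFinEquiv_symm_apply_natAdd, EL_inr]

lemma muF_strictMono (lam : LamT a b) : StrictMono (muF lam) := by
  intro i i' h
  have := mu_strictMono lam h
  simpa [muF, Fin.lt_def] using this

lemma sign_G (lam : LamT a b) :
    ((Equiv.Perm.sign (G lam) : ℤ)) = (-1) ^ (∑ j, nu lam j) := by
  have hsign : Equiv.Perm.sign (rho lam) = Equiv.Perm.sign (G lam) :=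
    Equiv.Perm.sign_permCongr _ _
  rw [← hsign]
  have hv := Matrix.det_permute (rho lam)
    (Matrix.vandermonde (fun k : Fin (a + b) => ((k : ℕ) : ℤ)))
  have hsub : (Matrix.vandermonde (fun k : Fin (a + b) => ((k : ℕ) : ℤ))).submatrix (rho lam) id
      = Matrix.vandermonde (fun k => ((((rho lam) k : Fin (a + b)) : ℕ) : ℤ)) := by
    ext p q
    simp [Matrix.vandermonde_apply, Matrix.submatrix_apply]
  rw [hsub, Matrix.det_vandermonde, Matrix.det_vandermonde, prod_sub_perm (rho lam)] at hv
  have hpos : (0 : ℤ) < ∏ p : Fin (a + b), ∏ q ∈ Ioi p, (((q : ℕ) : ℤ) - ((p : ℕ) : ℤ)) := by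
    apply Finset.prod_pos
    intro p _
    apply Finset.prod_pos
    intro q hq
    have h1 : p < q := Finset.mem_Ioi.mp hq
    have h2 : (p : ℕ) < (q : ℕ) := h1
    omega
  have hS := mul_right_cancel₀ (ne_of_gt hpos) hv
  have hScomp : (∏ p : Fin (a + b), ∏ q ∈ Ioi p,
      if rho lam p < rho lam q then (1 : ℤ) else -1) = (-1) ^ (∑ j, nu lam j) := by
    rw [prod_Ioi_split (f := fun p q => if rho lam p < rho lam q then (1 : ℤ) else -1)]
    have hblock1 : (∏ i : Fin a, ∏ i' ∈ Ioi i,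
        if rho lam (Fin.castAdd b i) < rho lam (Fin.castAdd b i') then (1 : ℤ) else -1) = 1 := by
      refine Finset.prod_eq_one fun i _ => Finset.prod_eq_one fun i' hi' => ?_
      rw [rho_castAdd, rho_castAdd, if_pos (muF_strictMono lam (Finset.mem_Ioi.mp hi'))]
    have hblock3 : (∏ j : Fin b, ∏ j' ∈ Ioi j,
        if rho lam (Fin.natAdd a j) < rho lam (Fin.natAdd a j') then (1 : ℤ) else -1)
        = ∏ j : Fin b, (-1 : ℤ) ^ (b - 1 - (j : ℕ)) := by
      refine Finset.prod_congr rfl fun j _ => ?_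
      have : ∀ j' ∈ Ioi j, (if rho lam (Fin.natAdd a j) < rho lam (Fin.natAdd a j')
          then (1 : ℤ) else -1) = -1 := by
        intro j' hj'
        rw [rho_natAdd, rho_natAdd, if_neg (asymm (cF_strictAnti lam (Finset.mem_Ioi.mp hj')))]
      rw [Finset.prod_congr rfl this, Finset.prod_const, Fin.card_Ioi]
    have hblock2 : (∏ i : Fin a, ∏ j : Fin b,
        if rho lam (Fin.castAdd b i) < rho lam (Fin.natAdd a j) then (1 : ℤ) else -1)
        = ∏ j : Fin b, (-1 : ℤ) ^ (nu lam j - (j : ℕ)) := by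
      rw [Finset.prod_comm]
      refine Finset.prod_congr rfl fun j _ => ?_
      have hpt : ∀ i : Fin a, (if rho lam (Fin.castAdd b i) < rho lam (Fin.natAdd a j)
          then (1 : ℤ) else -1) = (if cF lam j < muF lam i then (-1 : ℤ) else 1) := by
        intro i
        rw [rho_castAdd, rho_natAdd]
        rcases lt_trichotomy (muF lam i) (cF lam j) with h | h | h
        · rw [if_pos h, if_neg (asymm h)]
        · exact absurd h (muF_ne_cF lam i j)
        · rw [if_neg (asymm h), if_pos h]
      rw [Finset.prod_congr rfl (fun i _ => hpt i), Finset.prod_ite, Finset.prod_const,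
        Finset.prod_const, one_pow, mul_one]
      congr 1
      have := count_mu_above lam j
      omega
    rw [hblock1, hblock2, hblock3, one_mul, ← Finset.prod_mul_distrib]
    have : ∀ j : Fin b, (-1 : ℤ) ^ (nu lam j - (j : ℕ)) * (-1 : ℤ) ^ (b - 1 - (j : ℕ))
        = (-1 : ℤ) ^ ((nu lam j - (j : ℕ)) + (b - 1 - (j : ℕ))) := fun j => (pow_add _ _ _).symm
    rw [Finset.prod_congr rfl (fun j _ => this j), Finset.prod_pow_eq_pow_sum]
    have hj_le : ∀ j : Fin b, (j : ℕ) ≤ nu lam j := fun j => Nat.le_add_right _ _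
    have hrev : ∑ j : Fin b, (b - 1 - (j : ℕ)) = ∑ j : Fin b, (j : ℕ) :=
      Fintype.sum_bijective Fin.rev Fin.rev_involutive.bijective _ _
        (fun x => by rw [Fin.val_rev]; omega)
    have hsum : ∑ j : Fin b, ((nu lam j - (j : ℕ)) + (b - 1 - (j : ℕ))) = ∑ j : Fin b, nu lam j := by
      rw [Finset.sum_add_distrib, hrev, ← Finset.sum_add_distrib]
      exact Finset.sum_congr rfl fun j _ => by have := hj_le j; omega

    rw [hsum]
  rw [hScomp] at hS
  exact_mod_cast hS.symm


set_option maxHeartbeats 2000000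
set_option synthInstance.maxHeartbeats 400000

variable {a b : ℕ}

abbrev Rg (a b : ℕ) := MvPolynomial (Fin a ⊕ Fin b) ℤ

noncomputable def Nmat (a b : ℕ) : Matrix (Fin a ⊕ Fin b) (Fin a ⊕ Fin b) (Rg a b) :=
  Matrix.of fun p q => Sum.elim
    (fun i => (X (Sum.inl i) : Rg a b) ^ ((finSumFinEquiv q : ℕ)))
    (fun j => (-1 : Rg a b) ^ ((finSumFinEquiv q : ℕ)) *
      (X (Sum.inr j) : Rg a b) ^ (a + b - 1 - (finSumFinEquiv q : ℕ)))
    p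

lemma map_vandProd {R S : Type*} [CommRing R] [CommRing S] (f : R →+* S) {d : ℕ}
    (z : Fin d → R) : f (vandProd z) = vandProd (fun i => f (z i)) := by
  simp [vandProd, map_prod, map_sub]

lemma stepA (hb : 0 < b) :
    (Nmat a b).det = (-1 : Rg a b) ^ (a * b) *
      ((∏ i : Fin a, ∏ j : Fin b, (1 + (X (Sum.inl i) : Rg a b) * X (Sum.inr j))) *
       vandProd (fun i : Fin a => (X (Sum.inl i) : Rg a b)) *
       vandProd (fun j : Fin b => (X (Sum.inr j) : Rg a b))) := by
  set K := FractionRing (Rg a b)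
  set f := algebraMap (Rg a b) K with hf
  apply IsFractionRing.injective (Rg a b) K
  set x : Fin a → K := fun i => f (X (Sum.inl i)) with hx
  set y : Fin b → K := fun j => f (X (Sum.inr j)) with hy
  have ynz : ∀ j, y j ≠ 0 := by
    intro j h
    exact X_ne_zero _ ((map_eq_zero_iff f (IsFractionRing.injective _ _)).mp h)
  set z : Fin a ⊕ Fin b → K := Sum.elim x (fun j => -(y j)⁻¹) with hz
  set u : Fin a ⊕ Fin b → K := Sum.elim (fun _ => (1 : K)) (fun j => y j ^ (a + b - 1)) with hu
  -- the matrix after mapping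
  have hmap : (Nmat a b).map f = Matrix.of fun p q => u p * z p ^ ((finSumFinEquiv q : ℕ)) := by
    ext p q
    rcases p with i | j
    · simp [Nmat, Matrix.map_apply, hu, hz, hx, map_pow]
    · have he : (finSumFinEquiv q : ℕ) < a + b := (finSumFinEquiv q).2
      simp only [Nmat, Matrix.map_apply, Matrix.of_apply, Sum.elim_inr, map_mul, map_pow,
        map_neg, map_one, hu, hz]
      rw [neg_pow ((y j)⁻¹)]
      have hyy : y j ^ (a + b - 1 - (finSumFinEquiv q : ℕ)) =
          y j ^ (a + b - 1) * ((y j)⁻¹ ^ (finSumFinEquiv q : ℕ)) := by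
        have h1 : a + b - 1 - (finSumFinEquiv q : ℕ) + (finSumFinEquiv q : ℕ) = a + b - 1 := by
          omega
        calc y j ^ (a + b - 1 - (finSumFinEquiv q : ℕ))
            = y j ^ (a + b - 1 - (finSumFinEquiv q : ℕ)) *
              (y j ^ (finSumFinEquiv q : ℕ) * ((y j)⁻¹ ^ (finSumFinEquiv q : ℕ))) := by
              rw [← mul_pow, mul_inv_cancel₀ (ynz j), one_pow, mul_one]
          _ = y j ^ (a + b - 1) * ((y j)⁻¹ ^ (finSumFinEquiv q : ℕ)) := by
              rw [← mul_assoc, ← pow_add, h1]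
      have hyj : f (X (Sum.inr j)) = y j := rfl
      rw [hyj, hyy]
      ring
  rw [RingHom.map_det, RingHom.mapMatrix_apply, hmap]
  have hdet1 : (Matrix.of fun p q => u p * z p ^ ((finSumFinEquiv q : ℕ))).det =
      (∏ p, u p) * (Matrix.of fun p q => z p ^ ((finSumFinEquiv q : ℕ))).det :=
    Matrix.det_mul_column u _
  have hdet2 : (Matrix.of fun p q => z p ^ ((finSumFinEquiv q : ℕ))).det =
      (Matrix.vandermonde (fun k => z (finSumFinEquiv.symm k))).det := by
    rw [← Matrix.det_submatrix_equiv_self finSumFinEquiv]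
    congr 1
    ext p q
    simp [Matrix.vandermonde_apply]
  rw [hdet1, hdet2, Matrix.det_vandermonde]
  rw [prod_Ioi_split (f := fun p q => z (finSumFinEquiv.symm q) - z (finSumFinEquiv.symm p))]
  have hu_prod : ∏ p, u p = ∏ j, y j ^ (a + b - 1) := by
    rw [Fintype.prod_sum_type]
    simp [hu]
  have hb1 : (∏ i : Fin a, ∏ i' ∈ Ioi i, (z (finSumFinEquiv.symm (Fin.castAdd b i')) -
      z (finSumFinEquiv.symm (Fin.castAdd b i)))) = vandProd x := by
    simp only [finSumFinEquiv_symm_apply_castAdd, hz, Sum.elim_inl]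
    rfl
  have hb3 : (∏ j : Fin b, ∏ j' ∈ Ioi j, (z (finSumFinEquiv.symm (Fin.natAdd a j')) -
      z (finSumFinEquiv.symm (Fin.natAdd a j))))
      = vandProd y * (∏ j, (y j)⁻¹) ^ (b - 1) := by
    simp only [finSumFinEquiv_symm_apply_natAdd, hz, Sum.elim_inr]
    have hpt : ∀ j j' : Fin b, -(y j')⁻¹ - -(y j)⁻¹ =
        (y j' - y j) * ((y j)⁻¹ * (y j')⁻¹) := by
      intro j j'
      have e1 : y j * (y j)⁻¹ = 1 := mul_inv_cancel₀ (ynz j)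
      have e2 : y j' * (y j')⁻¹ = 1 := mul_inv_cancel₀ (ynz j')
      apply mul_right_cancel₀ (mul_ne_zero (ynz j) (ynz j'))
      calc (-(y j')⁻¹ - -(y j)⁻¹) * (y j * y j')
          = (y j * (y j)⁻¹) * y j' - (y j' * (y j')⁻¹) * y j := by ring
        _ = y j' - y j := by rw [e1, e2]; ring
        _ = ((y j' - y j) * ((y j)⁻¹ * (y j')⁻¹)) * (y j * y j') := by
            rw [show ((y j' - y j) * ((y j)⁻¹ * (y j')⁻¹)) * (y j * y j') =
              (y j * (y j)⁻¹) * ((y j' * (y j')⁻¹) * (y j' - y j)) from by ring, e1, e2]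
            ring
    calc (∏ j : Fin b, ∏ j' ∈ Ioi j, (-(y j')⁻¹ - -(y j)⁻¹))
        = ∏ j : Fin b, ∏ j' ∈ Ioi j, ((y j' - y j) * ((y j)⁻¹ * (y j')⁻¹)) := by
          exact Finset.prod_congr rfl fun j _ => Finset.prod_congr rfl fun j' _ => hpt j j'
      _ = (∏ j : Fin b, ∏ j' ∈ Ioi j, (y j' - y j)) *
          ∏ j : Fin b, ∏ j' ∈ Ioi j, ((y j)⁻¹ * (y j')⁻¹) := by
          rw [← Finset.prod_mul_distrib]
          exact Finset.prod_congr rfl fun j _ => Finset.prod_mul_distrib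
      _ = vandProd y * (∏ j, (y j)⁻¹) ^ (b - 1) := by
          rw [prod_pair_mul (u := fun j => (y j)⁻¹)]
          rfl
  have hb2 : (∏ i : Fin a, ∏ j : Fin b, (z (finSumFinEquiv.symm (Fin.natAdd a j)) -
      z (finSumFinEquiv.symm (Fin.castAdd b i))))
      = ((-1 : K) ^ (a * b) * (∏ j, (y j)⁻¹) ^ a) * ∏ i, ∏ j, (1 + x i * y j) := by
    simp only [finSumFinEquiv_symm_apply_natAdd, finSumFinEquiv_symm_apply_castAdd, hz,
      Sum.elim_inr, Sum.elim_inl]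
    have hpt : ∀ (i : Fin a) (j : Fin b), -(y j)⁻¹ - x i =
        -(y j)⁻¹ * (1 + x i * y j) := by
      intro i j
      have e1 : y j * (y j)⁻¹ = 1 := mul_inv_cancel₀ (ynz j)
      calc -(y j)⁻¹ - x i = -(y j)⁻¹ - (y j * (y j)⁻¹) * x i := by rw [e1]; ring
        _ = -(y j)⁻¹ * (1 + x i * y j) := by ring
    calc (∏ i : Fin a, ∏ j : Fin b, (-(y j)⁻¹ - x i))
        = ∏ i : Fin a, ∏ j : Fin b, (-(y j)⁻¹ * (1 + x i * y j)) := by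
          exact Finset.prod_congr rfl fun i _ => Finset.prod_congr rfl fun j _ => hpt i j
      _ = (∏ i : Fin a, ∏ j : Fin b, -(y j)⁻¹) * ∏ i, ∏ j, (1 + x i * y j) := by
          rw [← Finset.prod_mul_distrib]
          exact Finset.prod_congr rfl fun i _ => Finset.prod_mul_distrib
      _ = ((-1 : K) ^ (a * b) * (∏ j, (y j)⁻¹) ^ a) * ∏ i, ∏ j, (1 + x i * y j) := by
          congr 1
          have h1 : (∏ j : Fin b, -(y j)⁻¹) = (-1 : K) ^ b * ∏ j, (y j)⁻¹ := by
            rw [show (fun j : Fin b => -(y j)⁻¹) = fun j => (-1 : K) * (y j)⁻¹ from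
              funext fun j => by ring, Finset.prod_mul_distrib, Finset.prod_const]
            simp
          rw [Finset.prod_const, Finset.card_univ, Fintype.card_fin, h1, mul_pow, ← pow_mul,
            Nat.mul_comm b a]
  rw [hu_prod, hb1, hb2, hb3]
  have hy1 : (∏ j, y j ^ (a + b - 1)) * ((∏ j, (y j)⁻¹) ^ a * (∏ j, (y j)⁻¹) ^ (b - 1)) =
      1 := by
    rw [← pow_add, show a + (b - 1) = a + b - 1 by omega, Finset.prod_pow,
      Finset.prod_inv_distrib, inv_pow, mul_inv_cancel₀]
    exact pow_ne_zero _ (Finset.prod_ne_zero_iff.mpr fun j _ => ynz j)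
  have hrhs : f ((-1 : Rg a b) ^ (a * b) *
      ((∏ i : Fin a, ∏ j : Fin b, (1 + (X (Sum.inl i) : Rg a b) * X (Sum.inr j))) *
       vandProd (fun i : Fin a => (X (Sum.inl i) : Rg a b)) *
       vandProd (fun j : Fin b => (X (Sum.inr j) : Rg a b))))
      = (-1 : K) ^ (a * b) * ((∏ i, ∏ j, (1 + x i * y j)) * vandProd x * vandProd y) := by
    have hP : f (∏ i : Fin a, ∏ j : Fin b,
        (1 + (X (Sum.inl i) : Rg a b) * X (Sum.inr j))) = ∏ i, ∏ j, (1 + x i * y j) := by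
      rw [map_prod]
      refine Finset.prod_congr rfl fun i _ => ?_
      rw [map_prod]
      refine Finset.prod_congr rfl fun j _ => ?_
      rw [map_add, map_one, map_mul]
    rw [map_mul, map_mul, map_mul, map_pow, map_neg, map_one, map_vandProd, map_vandProd, hP]
  rw [hrhs]
  calc (∏ j, y j ^ (a + b - 1)) *
        ((vandProd x * (((-1 : K) ^ (a * b) * (∏ j, (y j)⁻¹) ^ a) *
          ∏ i, ∏ j, (1 + x i * y j))) * (vandProd y * (∏ j, (y j)⁻¹) ^ (b - 1)))
      = ((∏ j, y j ^ (a + b - 1)) * ((∏ j, (y j)⁻¹) ^ a * (∏ j, (y j)⁻¹) ^ (b - 1))) *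
        ((-1 : K) ^ (a * b) * ((∏ i, ∏ j, (1 + x i * y j)) * vandProd x * vandProd y)) := by
        ring
    _ = (-1 : K) ^ (a * b) * ((∏ i, ∏ j, (1 + x i * y j)) * vandProd x * vandProd y) := by
        rw [hy1, one_mul]


noncomputable def Phi (t : LamT a b × Equiv.Perm (Fin a) × Equiv.Perm (Fin b)) :
    Equiv.Perm (Fin a ⊕ Fin b) :=
  (Equiv.sumCongr t.2.1 t.2.2).trans (G t.1)

lemma Phi_inl (t : LamT a b × Equiv.Perm (Fin a) × Equiv.Perm (Fin b)) (i : Fin a) :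
    Phi t (Sum.inl i) = finSumFinEquiv.symm (muF t.1 (t.2.1 i)) := rfl

lemma Phi_inr (t : LamT a b × Equiv.Perm (Fin a) × Equiv.Perm (Fin b)) (j : Fin b) :
    Phi t (Sum.inr j) = finSumFinEquiv.symm (cF t.1 (t.2.2 j)) := rfl

lemma strictMono_key {a d : ℕ} {g : Fin a → Fin d} (hg : StrictMono g) :
    ∀ (n : ℕ) (k l : Fin a), (l : ℕ) = (k : ℕ) + n → (g k : ℕ) + n ≤ (g l : ℕ) := by
  intro n
  induction n with
  | zero =>
    intro k l h
    have : k = l := Fin.ext (by omega)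
    subst this; omega
  | succ n ih =>
    intro k l h
    have hl' : ((k : ℕ) + n) < a := by have := l.2; omega
    set l' : Fin a := ⟨(k : ℕ) + n, hl'⟩
    have h1 := ih k l' rfl
    have h2 : g l' < g l := hg (by simp [Fin.lt_def, l']; omega)
    have h3 : (g l' : ℕ) < g l := h2
    omega

/-- image of `muF` composed with a permutation. -/
lemma image_muF_perm (lam : LamT a b) (π : Equiv.Perm (Fin a)) :
    Finset.univ.image (fun i => muF lam (π i)) = Finset.univ.image (muF lam) := by
  ext t
  simp only [Finset.mem_image, Finset.mem_univ, true_and]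
  constructor
  · rintro ⟨i, rfl⟩; exact ⟨π i, rfl⟩
  · rintro ⟨i, rfl⟩; exact ⟨π.symm i, by rw [Equiv.apply_symm_apply]⟩

lemma Phi_injective : Function.Injective (Phi (a := a) (b := b)) := by
  rintro ⟨l1, π1, τ1⟩ ⟨l2, π2, τ2⟩ h
  have hkey : ∀ i : Fin a, muF l1 (π1 i) = muF l2 (π2 i) := by
    intro i
    have h1 := congrArg (fun σ : Equiv.Perm (Fin a ⊕ Fin b) => finSumFinEquiv (σ (Sum.inl i))) h
    simpa only [Phi_inl, Equiv.apply_symm_apply] using h1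
  have hkey2 : ∀ j : Fin b, cF l1 (τ1 j) = cF l2 (τ2 j) := by
    intro j
    have h1 := congrArg (fun σ : Equiv.Perm (Fin a ⊕ Fin b) => finSumFinEquiv (σ (Sum.inr j))) h
    simpa only [Phi_inr, Equiv.apply_symm_apply] using h1
  have himg : Finset.univ.image (muF l1) = Finset.univ.image (muF l2) := by
    rw [← image_muF_perm l1 π1, ← image_muF_perm l2 π2]
    exact Finset.image_congr fun i _ => hkey i
  have hcard : (Finset.univ.image (muF l1)).card = a := by
    rw [Finset.card_image_of_injective _ (muF_injective l1), Finset.card_univ, Fintype.card_fin]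
  have hmu12 : muF l1 = muF l2 := by
    rw [Finset.orderEmbOfFin_unique hcard (f := muF l1)
        (fun i => Finset.mem_image_of_mem _ (Finset.mem_univ i)) (muF_strictMono l1),
      Finset.orderEmbOfFin_unique hcard (f := muF l2)
        (fun i => himg ▸ Finset.mem_image_of_mem _ (Finset.mem_univ i)) (muF_strictMono l2)]
  have hL : L l1 = L l2 := by
    funext k
    have h1 := congrFun hmu12 k.rev
    have h2 : mu l1 k.rev = mu l2 k.rev := by simpa [muF, Fin.ext_iff] using h1
    simp only [mu, Fin.rev_rev] at h2
    omega
  have hlam : l1 = l2 := by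
    apply Subtype.ext
    funext k
    apply Fin.ext
    exact congrFun hL k
  subst hlam
  have hπ : π1 = π2 := by
    apply Equiv.ext
    intro i
    exact muF_injective l1 (hmu12 ▸ hkey i)
  have hτ : τ1 = τ2 := by
    apply Equiv.ext
    intro j
    exact cF_injective l1 (hkey2 j)
  rw [hπ, hτ]

lemma Phi_surjective : Function.Surjective (Phi (a := a) (b := b)) := by
  intro σ
  set e := finSumFinEquiv (m := a) (n := b) with he
  set s : Fin a → Fin (a + b) := fun i => e (σ (Sum.inl i)) with hs
  have hs_inj : Function.Injective s := fun i i' h =>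
    Sum.inl_injective (σ.injective (e.injective h))
  set S : Finset (Fin (a + b)) := Finset.univ.image s with hS
  have hcard : S.card = a := by
    rw [hS, Finset.card_image_of_injective _ hs_inj, Finset.card_univ, Fintype.card_fin]
  set m : Fin a → Fin (a + b) := fun k => S.orderEmbOfFin hcard k with hm
  have hm_mono : StrictMono m := (S.orderEmbOfFin hcard).strictMono
  have hm_mem : ∀ k, m k ∈ S := fun k => Finset.orderEmbOfFin_mem S hcard k
  have hge : ∀ k : Fin a, (k : ℕ) ≤ (m k : ℕ) := by
    intro k
    have h0 : (0 : ℕ) < a := lt_of_le_of_lt (Nat.zero_le _) k.2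
    have := strictMono_key hm_mono (k : ℕ) ⟨0, h0⟩ k (by simp)
    omega
  have hle : ∀ k : Fin a, (m k : ℕ) ≤ b + (k : ℕ) := by
    intro k
    have h0 : (0 : ℕ) < a := lt_of_le_of_lt (Nat.zero_le _) k.2
    have hlast : (a - 1 : ℕ) < a := by omega
    have := strictMono_key hm_mono ((a : ℕ) - 1 - k) k ⟨a - 1, hlast⟩ (by
      simp only [Fin.val_mk]
      have := k.2; omega)
    have h2 := (m ⟨a - 1, hlast⟩).2
    omega
  have hdiffmono : ∀ k l : Fin a, k ≤ l → (m k : ℕ) - (k : ℕ) ≤ (m l : ℕ) - (l : ℕ) := by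
    intro k l hkl
    have := strictMono_key hm_mono ((l : ℕ) - (k : ℕ)) k l (by
      have : (k : ℕ) ≤ (l : ℕ) := hkl
      omega)
    have := hge k
    omega
  set lamf : Fin a → Fin (b + 1) := fun k =>
    ⟨(m k.rev : ℕ) - (k.rev : ℕ), by have := hle k.rev; have := hge k.rev; omega⟩ with hlamf
  have hanti : ∀ i j : Fin a, i ≤ j → (lamf j : ℕ) ≤ (lamf i : ℕ) := by
    intro i j hij
    simp only [hlamf]
    exact hdiffmono j.rev i.rev (by rw [Fin.rev_le_rev]; exact hij)
  set lam0 : LamT a b := ⟨lamf, hanti⟩ with hlam0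
  have hmuF : muF lam0 = m := by
    funext i
    apply Fin.ext
    have : (muF lam0 i : ℕ) = (i : ℕ) + ((m i.rev.rev : ℕ) - (i.rev.rev : ℕ)) := rfl
    rw [this, Fin.rev_rev]
    have := hge i
    omega
  -- construct π
  have hsiS : ∀ i, s i ∈ S := fun i => Finset.mem_image_of_mem _ (Finset.mem_univ i)
  set π0f : Fin a → Fin a := fun i => (S.orderIsoOfFin hcard).symm ⟨s i, hsiS i⟩ with hπ0f
  have hmπ : ∀ i, m (π0f i) = s i := by
    intro i
    have h1 : (↑(S.orderIsoOfFin hcard (π0f i)) : Fin (a + b)) = S.orderEmbOfFin hcard (π0f i) :=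
      Finset.coe_orderIsoOfFin_apply S hcard _
    show S.orderEmbOfFin hcard (π0f i) = s i
    rw [← h1, hπ0f]
    simp
  have hπ0f_inj : Function.Injective π0f := by
    intro i i' h
    apply hs_inj
    rw [← hmπ i, ← hmπ i', h]
  set π0 : Equiv.Perm (Fin a) := Equiv.ofBijective π0f
    ((Fintype.bijective_iff_injective_and_card π0f).mpr ⟨hπ0f_inj, rfl⟩) with hπ0
  -- construct τ
  set t' : Fin b → Fin (a + b) := fun j => e (σ (Sum.inr j)) with ht'
  have ht'_inj : Function.Injective t' := fun j j' h =>
    Sum.inr_injective (σ.injective (e.injective h))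
  have hS_mu : S = Finset.univ.image (muF lam0) := by
    rw [hmuF]
    ext t
    simp only [hS, Finset.mem_image, Finset.mem_univ, true_and]
    constructor
    · rintro ⟨i, rfl⟩
      exact ⟨π0f i, hmπ i⟩
    · rintro ⟨k, rfl⟩
      have hkk : π0f (π0.symm k) = k := by
        rw [hπ0]
        exact Equiv.ofBijective_apply_symm_apply _ _ _
      exact ⟨π0.symm k, by rw [← hmπ (π0.symm k), hkk]⟩
  have hcF_img : Finset.univ.image (cF lam0) = Sᶜ := by
    apply Finset.eq_of_subset_of_card_le
    · intro t ht
      rcases Finset.mem_image.mp ht with ⟨j, _, rfl⟩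
      rw [Finset.mem_compl, hS_mu]
      intro hmem
      rcases Finset.mem_image.mp hmem with ⟨i, _, hi⟩
      exact muF_ne_cF lam0 i j hi
    · rw [Finset.card_compl, hcard, Finset.card_image_of_injective _ (cF_injective lam0),
        Finset.card_univ, Fintype.card_fin, Fintype.card_fin]
      omega
  have ht'notS : ∀ j, t' j ∈ Sᶜ := by
    intro j
    rw [Finset.mem_compl, hS]
    intro hmem
    rcases Finset.mem_image.mp hmem with ⟨i, _, hi⟩
    have := σ.injective (e.injective hi)
    exact Sum.inl_ne_inr this
  have hex : ∀ j, ∃ k, cF lam0 k = t' j := by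
    intro j
    have : t' j ∈ Finset.univ.image (cF lam0) := by rw [hcF_img]; exact ht'notS j
    rcases Finset.mem_image.mp this with ⟨k, _, hk⟩
    exact ⟨k, hk⟩
  choose τ0f hτ0f using hex
  have hτ0f_inj : Function.Injective τ0f := by
    intro j j' h
    apply ht'_inj
    rw [← hτ0f j, ← hτ0f j', h]
  set τ0 : Equiv.Perm (Fin b) := Equiv.ofBijective τ0f
    ((Fintype.bijective_iff_injective_and_card τ0f).mpr ⟨hτ0f_inj, rfl⟩) with hτ0
  refine ⟨(lam0, π0, τ0), ?_⟩
  apply Equiv.ext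
  rintro (i | j)
  · rw [Phi_inl]
    have hπ0i : π0 i = π0f i := rfl
    rw [hπ0i, hmuF, hmπ, hs]
    exact e.symm_apply_apply _
  · rw [Phi_inr]
    have hτ0j : τ0 j = τ0f j := rfl
    rw [hτ0j, hτ0f, ht']
    exact e.symm_apply_apply _


lemma altDet_x (lam : LamT a b) :
    altDet (fun i => ((lam.1 i : ℕ))) (fun i : Fin a => (X (Sum.inl i) : Rg a b))
    = ∑ π : Equiv.Perm (Fin a), ((Equiv.Perm.sign π : ℤ) : Rg a b) *
        ∏ i : Fin a, (X (Sum.inl i) : Rg a b) ^ (mu lam (π i)) := by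
  rw [altDet, Matrix.det_apply']
  exact Finset.sum_congr rfl fun π _ => rfl

lemma altDet_y (lam : LamT a b) :
    altDet (conjPart b (fun i => ((lam.1 i : ℕ)))) (fun j : Fin b => (X (Sum.inr j) : Rg a b))
    = ∑ τ : Equiv.Perm (Fin b), ((Equiv.Perm.sign τ : ℤ) : Rg a b) *
        ∏ j : Fin b, (X (Sum.inr j) : Rg a b) ^ (nu lam (τ j)) := by
  rw [altDet, Matrix.det_apply']
  exact Finset.sum_congr rfl fun τ _ => rfl

lemma neg_one_pow_key (hb : 0 < b) (lam : LamT a b) :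
    (-1 : Rg a b) ^ (a * b) * ((-1 : Rg a b) ^ (∑ j, nu lam j) *
      (-1 : Rg a b) ^ (∑ j : Fin b, ((cF lam j : ℕ)))) = 1 := by
  rw [← pow_add, ← pow_add]
  apply Even.neg_one_pow
  have hAB : (∑ j, nu lam j) + (∑ j : Fin b, ((cF lam j : ℕ))) = b * (a + b - 1) := by
    rw [← Finset.sum_add_distrib]
    have : ∀ j : Fin b, nu lam j + ((cF lam j : ℕ)) = a + b - 1 := by
      intro j
      have h1 : (cF lam j : ℕ) = a + b - 1 - nu lam j := rfl
      have := nu_le lam j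
      omega
    rw [Finset.sum_congr rfl fun j _ => this j, Finset.sum_const, Finset.card_univ,
      Fintype.card_fin, smul_eq_mul]
  rw [hAB]
  have h2 : a * b + b * (a + b - 1) = 2 * (a * b) + (b - 1) * ((b - 1) + 1) := by
    cases b with
    | zero => omega
    | succ b' =>
      have e1 : a + (b' + 1) - 1 = a + b' := by omega
      have e2 : b' + 1 - 1 = b' := by omega
      rw [e1, e2]
      ring
  rw [h2]
  exact (even_two_mul _).add (Nat.even_mul_succ_self _)

lemma term_eq (hb : 0 < b) (t : LamT a b × Equiv.Perm (Fin a) × Equiv.Perm (Fin b)) :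
    (((Equiv.Perm.sign t.2.1 : ℤ) : Rg a b) *
        ∏ i : Fin a, (X (Sum.inl i) : Rg a b) ^ (mu t.1 (t.2.1 i))) *
      (((Equiv.Perm.sign t.2.2 : ℤ) : Rg a b) *
        ∏ j : Fin b, (X (Sum.inr j) : Rg a b) ^ (nu t.1 (t.2.2 j)))
    = (-1 : Rg a b) ^ (a * b) * (((Equiv.Perm.sign (Phi t) : ℤ) : Rg a b) *
        ∏ p : Fin a ⊕ Fin b, (Nmat a b).transpose (Phi t p) p) := by
  obtain ⟨lam, π, τ⟩ := t
  -- the product over rows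
  have hprod : ∏ p : Fin a ⊕ Fin b, (Nmat a b).transpose (Phi (lam, π, τ) p) p
      = (∏ i : Fin a, (X (Sum.inl i) : Rg a b) ^ (mu lam (π i))) *
        ((-1 : Rg a b) ^ (∑ j : Fin b, ((cF lam j : ℕ))) *
          ∏ j : Fin b, (X (Sum.inr j) : Rg a b) ^ (nu lam (τ j))) := by
    rw [Fintype.prod_sum_type]
    congr 1
    · refine Finset.prod_congr rfl fun i _ => ?_
      show (Nmat a b) (Sum.inl i) (Phi (lam, π, τ) (Sum.inl i)) = _
      rw [Phi_inl]
      show (X (Sum.inl i) : Rg a b) ^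
        ((finSumFinEquiv (finSumFinEquiv.symm (muF lam (π i))) : ℕ)) = _
      rw [Equiv.apply_symm_apply]
      rfl
    · have hpt : ∀ j : Fin b, (Nmat a b).transpose (Phi (lam, π, τ) (Sum.inr j)) (Sum.inr j)
          = (-1 : Rg a b) ^ ((cF lam (τ j) : ℕ)) *
            (X (Sum.inr j) : Rg a b) ^ (nu lam (τ j)) := by
        intro j
        show (Nmat a b) (Sum.inr j) (Phi (lam, π, τ) (Sum.inr j)) = _
        rw [Phi_inr]
        show (-1 : Rg a b) ^
            ((finSumFinEquiv (finSumFinEquiv.symm (cF lam (τ j))) : ℕ)) *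
            (X (Sum.inr j) : Rg a b) ^
            (a + b - 1 - (finSumFinEquiv (finSumFinEquiv.symm (cF lam (τ j))) : ℕ)) = _
        rw [Equiv.apply_symm_apply]
        congr 2
        have h1 : (cF lam (τ j) : ℕ) = a + b - 1 - nu lam (τ j) := rfl
        have := nu_le lam (τ j)
        omega
      rw [Finset.prod_congr rfl fun j _ => hpt j, Finset.prod_mul_distrib]
      congr 1
      rw [Equiv.prod_comp τ (fun j => (-1 : Rg a b) ^ ((cF lam j : ℕ))),
        Finset.prod_pow_eq_pow_sum]
  -- the sign
  have hsg : ((Equiv.Perm.sign (Phi (lam, π, τ)) : ℤ) : Rg a b)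
      = ((Equiv.Perm.sign π : ℤ) : Rg a b) * ((Equiv.Perm.sign τ : ℤ) : Rg a b) *
        (-1 : Rg a b) ^ (∑ j, nu lam j) := by
    have h1 : Equiv.Perm.sign (Phi (lam, π, τ))
        = Equiv.Perm.sign (G lam) * (Equiv.Perm.sign π * Equiv.Perm.sign τ) := by
      rw [Phi, Equiv.Perm.sign_trans, Equiv.Perm.sign_sumCongr]
    have h2 : ((Equiv.Perm.sign (Phi (lam, π, τ)) : ℤ)) =
        (Equiv.Perm.sign (G lam) : ℤ) * ((Equiv.Perm.sign π : ℤ) * (Equiv.Perm.sign τ : ℤ)) := by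
      rw [h1]; push_cast; ring
    rw [h2, sign_G lam]
    push_cast
    ring
  rw [hprod, hsg]
  have hkey := neg_one_pow_key hb lam
  calc (((Equiv.Perm.sign π : ℤ) : Rg a b) *
        ∏ i : Fin a, (X (Sum.inl i) : Rg a b) ^ (mu lam (π i))) *
      (((Equiv.Perm.sign τ : ℤ) : Rg a b) *
        ∏ j : Fin b, (X (Sum.inr j) : Rg a b) ^ (nu lam (τ j)))
      = ((-1 : Rg a b) ^ (a * b) * ((-1 : Rg a b) ^ (∑ j, nu lam j) *
          (-1 : Rg a b) ^ (∑ j : Fin b, ((cF lam j : ℕ))))) *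
        ((((Equiv.Perm.sign π : ℤ) : Rg a b) *
          ∏ i : Fin a, (X (Sum.inl i) : Rg a b) ^ (mu lam (π i))) *
        (((Equiv.Perm.sign τ : ℤ) : Rg a b) *
          ∏ j : Fin b, (X (Sum.inr j) : Rg a b) ^ (nu lam (τ j)))) := by
        rw [hkey, one_mul]
    _ = _ := by ring

end DC

open DC

/-- The dual Cauchy identity
`∏_{i,j} (1 + x_i y_j) = Σ_λ s_λ(x) s_{λ'}(y)` (summed over partitions `λ` fitting in an
`a × b` box), stated after clearing the Vandermonde denominators of the bialternant formula:
`s_λ(x) = altDet λ x / vandProd x`. -/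
theorem dual_cauchy (a b : ℕ) (ha : 0 < a) (hb : 0 < b) :
    (∏ i : Fin a, ∏ j : Fin b,
        (1 + (X (Sum.inl i) : MvPolynomial (Fin a ⊕ Fin b) ℤ) * X (Sum.inr j))) *
      vandProd (fun i : Fin a => (X (Sum.inl i) : MvPolynomial (Fin a ⊕ Fin b) ℤ)) *
      vandProd (fun j : Fin b => (X (Sum.inr j) : MvPolynomial (Fin a ⊕ Fin b) ℤ)) =
    ∑ lam : {lam : Fin a → Fin (b + 1) // ∀ i j : Fin a, i ≤ j → (lam j : ℕ) ≤ (lam i : ℕ)},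
      altDet (fun i => (lam.1 i : ℕ))
          (fun i : Fin a => (X (Sum.inl i) : MvPolynomial (Fin a ⊕ Fin b) ℤ)) *
        altDet (conjPart b (fun i => (lam.1 i : ℕ)))
          (fun j : Fin b => (X (Sum.inr j) : MvPolynomial (Fin a ⊕ Fin b) ℤ)) := by
  classical
  have h1 : ((-1 : Rg a b) ^ (a * b)) * (Nmat a b).det
      = (∏ i : Fin a, ∏ j : Fin b,
          (1 + (X (Sum.inl i) : Rg a b) * X (Sum.inr j))) *
        vandProd (fun i : Fin a => (X (Sum.inl i) : Rg a b)) *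
        vandProd (fun j : Fin b => (X (Sum.inr j) : Rg a b)) := by
    rw [stepA hb, ← mul_assoc, ← mul_pow]
    norm_num
  rw [← h1, ← Matrix.det_transpose (Nmat a b), Matrix.det_apply', Finset.mul_sum]
  have hbij : Function.Bijective (Phi (a := a) (b := b)) := ⟨Phi_injective, Phi_surjective⟩
  rw [← Fintype.sum_bijective (Phi (a := a) (b := b)) hbij
    (fun t => (((Equiv.Perm.sign t.2.1 : ℤ) : Rg a b) *
        ∏ i : Fin a, (X (Sum.inl i) : Rg a b) ^ (mu t.1 (t.2.1 i))) *
      (((Equiv.Perm.sign t.2.2 : ℤ) : Rg a b) *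
        ∏ j : Fin b, (X (Sum.inr j) : Rg a b) ^ (nu t.1 (t.2.2 j))))
    (fun σ => (-1 : Rg a b) ^ (a * b) * (((Equiv.Perm.sign σ : ℤ) : Rg a b) *
        ∏ p : Fin a ⊕ Fin b, (Nmat a b).transpose (σ p) p))
    (fun t => term_eq hb t)]
  rw [Fintype.sum_prod_type]
  refine Finset.sum_congr rfl fun lam _ => ?_
  rw [altDet_x lam, altDet_y lam, Finset.sum_mul_sum, Fintype.sum_prod_type]
end

section
/- In the symmetric group S_{n+1} viewed as the Coxeter group A_n with simple generators s_1,…,s_n, the minimum number of occurrences of the generator s_k in any reduced word for the longest element w_0 equals min(k, n+1−k). Equivalently, the vector of these minima is (1,2,…,⌈n/2⌉,…,2,1) for n odd and (1,2,…,n/2,n/2,…,2,1) for n even. -/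
namespace W0Aux


variable (n : ℕ)

def t (i : ℕ) : Equiv.Perm (Fin (n+1)) :=
  if h : i < n then Equiv.swap (⟨i, by omega⟩ : Fin (n+1)) ⟨i+1, by omega⟩ else 1

lemma t_apply_val (i : ℕ) (hi : i < n) (x : Fin (n+1)) :
    ((t n i) x).val = if x.val = i then i+1 else if x.val = i+1 then i else x.val := by
  rw [t, dif_pos hi, Equiv.swap_apply_def]
  split_ifs with h1 h2 h3 h4 h5 <;> simp_all [Fin.ext_iff]

def run (a m : ℕ) : List ℕ := (List.range' a m).reverse

lemma run_succ (a m : ℕ) : run a (m+1) = (a+m) :: run a m := by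
  rw [run, List.range'_concat, List.reverse_append]
  simp [run]

lemma run_prod_val (a m : ℕ) (h : a + m ≤ n) (x : Fin (n+1)) :
    ((((run a m).map (t n)).prod) x).val =
      if x.val = a then a + m else if a < x.val ∧ x.val ≤ a + m then x.val - 1 else x.val := by
  induction m with
  | zero =>
    simp [run]
    split_ifs <;> omega
  | succ m ih =>
    rw [run_succ]
    simp only [List.map_cons, List.prod_cons, Equiv.Perm.mul_apply]
    rw [t_apply_val n (a+m) (by omega), ih (by omega)]
    split_ifs <;> omega

lemma run_length (a m : ℕ) : (run a m).length = m := by simp [run]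

lemma mem_run {a m i : ℕ} : i ∈ run a m ↔ a ≤ i ∧ i < a + m := by
  rw [run, List.mem_reverse, List.mem_range'_1]

lemma run_nodup (a m : ℕ) : (run a m).Nodup := by
  rw [run, List.nodup_reverse]; exact List.nodup_range'

lemma run_count (a m v : ℕ) : (run a m).count v = if a ≤ v ∧ v < a + m then 1 else 0 := by
  split_ifs with h
  · exact List.count_eq_one_of_mem (run_nodup a m) (mem_run.2 h)
  · exact List.count_eq_zero.2 (fun hm => h (mem_run.1 hm))

/-- word for the reversal of the segment `[a, a+m-1]` -/
def rword (a : ℕ) : ℕ → List ℕ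
  | 0 => []
  | (m+1) => run a m ++ rword (a+1) m

lemma mem_rword {i : ℕ} : ∀ {m a : ℕ}, i ∈ rword a m → a ≤ i ∧ i + 2 ≤ a + m := by
  intro m
  induction m with
  | zero => intro a h; simp [rword] at h
  | succ m ih =>
    intro a h
    rw [rword, List.mem_append] at h
    rcases h with h | h
    · have := mem_run.1 h; omega
    · have := ih h; omega

lemma rword_prod_val : ∀ (m a : ℕ), a + m ≤ n + 1 → ∀ x : Fin (n+1),
    ((((rword a m).map (t n)).prod) x).val =
      if a ≤ x.val ∧ x.val < a + m then 2*a + m - 1 - x.val else x.val := by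
  intro m
  induction m with
  | zero =>
    intro a _ x
    simp only [rword, List.map_nil, List.prod_nil, Equiv.Perm.one_apply]
    split_ifs <;> omega
  | succ m ih =>
    intro a h x
    rw [rword]
    simp only [List.map_append, List.prod_append, Equiv.Perm.mul_apply]
    rw [run_prod_val n a m (by omega), ih (a+1) (by omega)]
    split_ifs <;> omega

lemma rword_length : ∀ (m a : ℕ), 2 * (rword a m).length = m * (m-1) := by
  intro m
  induction m with
  | zero => intro a; simp [rword]
  | succ m ih =>
    intro a
    rw [rword, List.length_append, run_length]
    have := ih (a+1)
    cases m with
    | zero => simpa using this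
    | succ m' =>
      simp only [Nat.add_sub_cancel] at this ⊢
      have hB : (m' + 1 + 1) * (m' + 1) = (m' + 1) * m' + 2 * (m' + 1) := by ring
      linarith

lemma rword_count (a m v : ℕ) (h : ¬ (a ≤ v ∧ v + 2 ≤ a + m)) : (rword a m).count v = 0 :=
  List.count_eq_zero.2 (fun hm => h (mem_rword hm))

/-- word for the rotation sending `x ↦ x + m` for `x < j`, `x ↦ x - j` for `j ≤ x < j + m`. -/
def bword (m j : ℕ) : List ℕ := (List.range j).flatMap (fun r => run r m)

lemma bword_succ (m j : ℕ) : bword m (j+1) = bword m j ++ run j m := by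
  rw [bword, List.range_succ, List.flatMap_append, bword]
  simp

lemma bword_prod_val : ∀ (j : ℕ), j + m ≤ n + 1 → ∀ x : Fin (n+1),
    ((((bword m j).map (t n)).prod) x).val =
      if x.val < j then x.val + m else if x.val < j + m then x.val - j else x.val := by
  intro j
  induction j with
  | zero =>
    intro _ x
    simp only [bword, List.range_zero, List.flatMap_nil, List.map_nil, List.prod_nil,
      Equiv.Perm.one_apply]
    split_ifs <;> omega
  | succ j ih =>
    intro h x
    rw [bword_succ]
    simp only [List.map_append, List.prod_append, Equiv.Perm.mul_apply]
    rw [ih (by omega), run_prod_val n j m (by omega)]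
    split_ifs <;> omega

lemma bword_length (m : ℕ) : ∀ j, (bword m j).length = j * m := by
  intro j
  induction j with
  | zero => simp [bword]
  | succ j ih => rw [bword_succ, List.length_append, run_length, ih]; ring

lemma bword_count (m : ℕ) (k : ℕ) (hm : 1 ≤ m) :
    ∀ j, j ≤ k + 1 → (bword m j).count k = j - min j (k+1-m) := by
  intro j
  induction j with
  | zero => intro _; simp [bword]
  | succ j ih =>
    intro hj
    rw [bword_succ, List.count_append, ih (by omega), run_count]
    have : j ≤ k := by omega
    split_ifs <;> omega



/-- The full word for the longest element, adapted to the cut at `k` (zero-based). -/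
def W (n k : ℕ) : List ℕ := bword (n - k) (k + 1) ++ rword 0 (k + 1) ++ rword (k + 1) (n - k)

lemma W_mem {n k i : ℕ} (hk : k < n) (hi : i ∈ W n k) : i < n := by
  rcases List.mem_append.1 hi with hi | hi
  · rcases List.mem_append.1 hi with hi | hi
    · rw [bword, List.mem_flatMap] at hi
      obtain ⟨r, hr, hir⟩ := hi
      rw [List.mem_range] at hr
      have := mem_run.1 hir
      omega
    · have := mem_rword hi; omega
  · have := mem_rword hi; omega

lemma W_prod (n k : ℕ) (hk : k < n) :
    (((W n k).map (t n)).prod) = (Fin.revPerm : Equiv.Perm (Fin (n + 1))) := by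
  apply Equiv.ext
  intro x
  apply Fin.ext
  rw [W]
  simp only [List.map_append, List.prod_append, Equiv.Perm.mul_apply]
  have hx := x.isLt
  rw [bword_prod_val n (k+1) (by omega), rword_prod_val n (k+1) 0 (by omega),
    rword_prod_val n (n-k) (k+1) (by omega)]
  have hrev : ((Fin.revPerm x : Fin (n+1)) : ℕ) = n - (x : ℕ) := by
    simp only [Fin.revPerm_apply]
    have := Fin.val_rev x
    omega
  rw [hrev]
  split_ifs <;> omega

lemma W_length (n k : ℕ) (hk : k < n) : (W n k).length = n * (n + 1) / 2 := by
  rw [W, List.length_append, List.length_append, bword_length]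
  have h1 := rword_length (k+1) 0
  have h2 := rword_length (n-k) (k+1)
  have h3 : 2 * ((k+1) * (n-k)) + (k+1) * ((k+1) - 1) + (n-k) * ((n-k) - 1)
      = n * (n + 1) := by
    obtain ⟨m, hm⟩ : ∃ m, n - k = m + 1 := ⟨n - k - 1, by omega⟩
    rw [hm]
    have hn : n = k + m + 1 := by omega
    subst hn
    simp only [Nat.add_sub_cancel]
    ring
  obtain ⟨P, hP⟩ : ∃ P, n * (n+1) = P := ⟨_, rfl⟩
  rw [hP] at h3
  omega

lemma W_count (n k : ℕ) (hk : k < n) : (W n k).count k = min (k + 1) (n - k) := by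
  rw [W, List.count_append, List.count_append]
  rw [bword_count (n-k) k (by omega) (k+1) le_rfl]
  rw [rword_count 0 (k+1) k (by omega), rword_count (k+1) (n-k) k (by omega)]
  omega



lemma swap_val_le_iff {n : ℕ} {a k : Fin n} (hak : a ≠ k) (y : Fin (n+1)) :
    ((Equiv.swap a.castSucc a.succ y : Fin (n+1)) : ℕ) ≤ (k : ℕ) ↔ (y : ℕ) ≤ (k : ℕ) := by
  have hak' : (a : ℕ) ≠ (k : ℕ) := fun h => hak (Fin.ext h)
  rw [Equiv.swap_apply_def]
  split_ifs with h1 h2 <;>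
    simp_all [Fin.ext_iff] <;> omega

/-- the wall-crossing invariant set -/
noncomputable def S {n : ℕ} (k : Fin n) (σ : Equiv.Perm (Fin (n+1))) : Finset (Fin (n+1)) :=
  Finset.univ.filter (fun x => (x : ℕ) ≤ (k : ℕ) ∧ ((σ x : Fin (n+1)) : ℕ) ≤ (k : ℕ))

open Fin.NatCast in
lemma lower_aux {n : ℕ} (k : Fin n) : ∀ ω : List (Fin n),
    (k : ℕ) + 1 ≤
      (S k (ω.map fun i : Fin n => Equiv.swap i.castSucc i.succ).prod).card + ω.count k := by
  intro ω
  induction ω with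
  | nil =>
    simp only [List.map_nil, List.prod_nil, List.count_nil, add_zero]
    have : Finset.range ((k : ℕ) + 1) ⊆ Finset.range ((k:ℕ)+1) := subset_rfl
    have hcard : (k : ℕ) + 1 ≤ (S k 1).card := by
      have := Finset.card_le_card_of_injOn (fun i : ℕ => (i : Fin (n+1)))
        (s := Finset.range ((k : ℕ) + 1)) (t := S k 1)
        (by
          intro i hi
          rw [Finset.coe_range, Set.mem_Iio] at hi
          have hik : i < n + 1 := by have := k.isLt; omega
          refine Finset.mem_coe.2 (Finset.mem_filter.2 ⟨Finset.mem_univ _, ?_, ?_⟩) <;>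
          simp only [Equiv.Perm.one_apply] <;>
          rw [Fin.val_cast_of_lt hik] <;>
          omega)
        (by
          intro a ha b hb hab
          rw [Finset.coe_range, Set.mem_Iio] at ha hb
          have hik := k.isLt
          have h2 := congrArg Fin.val hab
          dsimp only at h2
          rwa [Fin.val_cast_of_lt (by omega), Fin.val_cast_of_lt (by omega)] at h2)
      simpa using this
    simpa using hcard
  | cons a l ih =>
    simp only [List.map_cons, List.prod_cons, List.count_cons]
    have key : (S k (l.map fun i : Fin n => Equiv.swap i.castSucc i.succ).prod).card ≤
        (S k ((Equiv.swap a.castSucc a.succ) *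
          (l.map fun i : Fin n => Equiv.swap i.castSucc i.succ).prod)).card +
        (if (a == k) = true then 1 else 0) := by
      set P := (l.map fun i : Fin n => Equiv.swap i.castSucc i.succ).prod with hP
      by_cases hak : a = k
      · subst hak
        simp only [beq_self_eq_true, if_true]
        have hsub : S a P ⊆ S a (Equiv.swap a.castSucc a.succ * P) ∪
            Finset.univ.filter (fun x => P x = a.castSucc) := by
          intro x hx
          simp only [S, Finset.mem_filter, Finset.mem_univ, true_and] at hx
          rw [Finset.mem_union]
          by_cases hs : ((Equiv.swap a.castSucc a.succ (P x) : Fin (n+1)) : ℕ) ≤ (a : ℕ)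
          · left
            simp only [S, Finset.mem_filter, Finset.mem_univ, true_and, Equiv.Perm.mul_apply]
            exact Finset.mem_filter.2 ⟨Finset.mem_univ _, hx.1, hs⟩
          · right
            simp only [Finset.mem_filter, Finset.mem_univ, true_and]
            -- P x has val ≤ a but swapping a, a+1 pushes it above a : must be = a
            have hy := hx.2
            rw [Equiv.swap_apply_def] at hs
            split_ifs at hs with h1 h2
            · exact h1
            · exfalso; exact hs (by simp)
            · exact absurd hy hs
        calc (S a P).card ≤ _ := Finset.card_le_card hsub
          _ ≤ (S a (Equiv.swap a.castSucc a.succ * P)).card +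
              (Finset.univ.filter (fun x => P x = a.castSucc)).card := Finset.card_union_le _ _
          _ ≤ _ := by
              refine Nat.add_le_add_left ?_ _
              rw [Finset.card_le_one]
              intro x hx y hy
              simp only [Finset.mem_filter] at hx hy
              exact P.injective (hx.2.trans hy.2.symm)
      · have : S k (Equiv.swap a.castSucc a.succ * P) = S k P := by
          unfold S
          apply Finset.filter_congr
          intro x _
          simp only [Equiv.Perm.mul_apply]
          rw [swap_val_le_iff hak]
        rw [this]
        simp
    omega

lemma lower {n : ℕ} (k : Fin n) (ω : List (Fin n))
    (hω : (ω.map fun i : Fin n => Equiv.swap i.castSucc i.succ).prod =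
      (Fin.revPerm : Equiv.Perm (Fin (n + 1)))) :
    min ((k : ℕ) + 1) (n - (k : ℕ)) ≤ ω.count k := by
  have h1 := lower_aux k ω
  rw [hω] at h1
  have h2 : (S k (Fin.revPerm : Equiv.Perm (Fin (n + 1)))).card ≤
      ((k : ℕ) + 1) - min ((k : ℕ) + 1) (n - (k : ℕ)) := by
    have hsub := Finset.card_le_card_of_injOn (fun x : Fin (n+1) => (x : ℕ))
      (s := S k (Fin.revPerm : Equiv.Perm (Fin (n + 1))))
      (t := Finset.Icc (n - (k : ℕ)) (k : ℕ))
      (by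
        intro x hx
        simp only [S, Finset.mem_coe, Finset.mem_filter, Finset.mem_univ, true_and, Fin.revPerm_apply] at hx
        rw [Finset.mem_coe, Finset.mem_Icc]
        dsimp only
        have := Fin.val_rev x
        have hx1 := x.isLt
        omega)
      (fun a _ b _ hab => Fin.ext hab)
    rw [Nat.card_Icc] at hsub
    omega
  omega


end W0Aux

open W0Aux in
/-- In the symmetric group `S_{n+1}`, viewed as the Coxeter group `A_n` with simple generators
`s_i = (i, i+1)`, the minimum number of occurrences of `s_k` (zero-based `k : Fin n`, i.e. the
`(k+1)`-st generator) in a reduced word for the longest element `w₀` (the reverse permutation,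
of length `n(n+1)/2`) equals `min (k+1) (n-k)`. -/
theorem min_occurrences_in_reduced_words_of_w0 (n : ℕ) (hn : 0 < n) (k : Fin n) :
    IsLeast {c : ℕ | ∃ ω : List (Fin n),
        (ω.map fun i : Fin n => Equiv.swap i.castSucc i.succ).prod =
          (Fin.revPerm : Equiv.Perm (Fin (n + 1))) ∧
        ω.length = n * (n + 1) / 2 ∧
        c = ω.count k}
      (min ((k : ℕ) + 1) (n - (k : ℕ))) := by
  constructor
  · -- membership : the explicit word
    have H : ∀ i ∈ W n (k : ℕ), i < n := fun i hi => W_mem k.isLt hi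
    refine ⟨(W n (k : ℕ)).pmap (fun i h => (⟨i, h⟩ : Fin n)) H, ?_, ?_, ?_⟩
    · have hmap : ((W n (k : ℕ)).pmap (fun i h => (⟨i, h⟩ : Fin n)) H).map
          (fun i : Fin n => Equiv.swap i.castSucc i.succ) = (W n (k : ℕ)).map (t n) := by
        rw [List.map_pmap, ← List.pmap_eq_map (p := fun i => i < n) (f := t n) H]
        apply List.pmap_congr_left
        intro a ha h1 h2
        rw [t, dif_pos h1]
        congr 1 <;> apply Fin.ext <;> simp
      rw [hmap, W_prod n (k : ℕ) k.isLt]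
    · rw [List.length_pmap, W_length n (k : ℕ) k.isLt]
    · have hval : ((W n (k : ℕ)).pmap (fun i h => (⟨i, h⟩ : Fin n)) H).map Fin.val
          = W n (k : ℕ) := by
        rw [List.map_pmap]
        have : ∀ (l : List ℕ) (H : ∀ i ∈ l, i < n),
            l.pmap (fun a h => ((⟨a, h⟩ : Fin n) : ℕ)) H = l := by
          intro l
          induction l with
          | nil => intro _; rfl
          | cons a l ih => intro H; simp [ih]
        exact this _ H
      have hcount : ((W n (k : ℕ)).pmap (fun i h => (⟨i, h⟩ : Fin n)) H).count k
          = (W n (k : ℕ)).count (k : ℕ) := by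
        conv_rhs => rw [← hval]
        exact (List.count_map_of_injective _ Fin.val Fin.val_injective k).symm
      rw [hcount, W_count n (k : ℕ) k.isLt]
  · rintro c ⟨ω, hprod, -, hcount⟩
    rw [hcount]
    exact lower k ω hprod
end
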